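/- arXiv:1602.07342 — 5 statements merged into one kernel-verified Lean document; each statement's English description precedes it below -/
import Mathlib

section
/- Let E : [0,∞) → [0,∞) be nondecreasing and continuous with E(0) = 0, and let dE denote its Lebesgue–Stieltjes measure (the Borel measure with dE((a,b]) = E(b) − E(a)). Let T > 0, let x : [0,T] → [0,∞) be Borel measurable and bounded, let K : [0,T] → [0,∞) be Borel measurable and dE-integrable on (0,T], and let u₀ ≥ 0. If x(t) ≤ u₀ + ∫_{(0,t]} K(s)·x(s) dE(s) for every t ∈ [0,T], then x(t) ≤ u₀·exp(∫_{(0,t]} K(s) dE(s)) for every t ∈ [0,T]. -/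
open MeasureTheory Topology ENNReal

open Set ENNReal in
private lemma gron_key (ν : Measure ℝ) [IsFiniteMeasure ν] [NullSingletonClass ν] :
    ∀ (n : ℕ) (a u : ℝ), a ≤ u →
      (n + 1 : ℝ≥0∞) * (∫⁻ s in Set.Ioc a u, (ν (Set.Iic s)) ^ n ∂ν)
          + (ν (Set.Iic a)) ^ (n + 1)
        ≤ (ν (Set.Iic u)) ^ (n + 1) := by
  have hGmono : Monotone (fun s : ℝ => ν (Set.Iic s)) :=
    fun s t h => measure_mono (Set.Iic_subset_Iic.2 h)
  have hGmeas : Measurable (fun s : ℝ => ν (Set.Iic s)) := hGmono.measurable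
  intro n
  induction n with
  | zero =>
    intro a u hau
    have hsplit : ν (Set.Iic a) + ν (Set.Ioc a u) = ν (Set.Iic u) := by
      rw [← measure_union (Set.Iic_disjoint_Ioc le_rfl) measurableSet_Ioc,
        Set.Iic_union_Ioc_eq_Iic hau]
    simpa [add_comm] using hsplit.le
  | succ n IH =>
    intro a u hau
    set G : ℝ → ℝ≥0∞ := fun s => ν (Set.Iic s) with hG
    set S : Set ℝ := Set.Ioc a u with hS
    have hSmeas : MeasurableSet S := measurableSet_Ioc
    have hνIoc_meas : Measurable (fun s : ℝ => ν (Set.Ioc a s)) :=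
      Monotone.measurable (fun s t h => measure_mono (Set.Ioc_subset_Ioc_right h))
    -- decomposition G s = G a + ν (Ioc a s) for s ≥ a
    have hGdecomp : ∀ s, a ≤ s → G s = G a + ν (Set.Ioc a s) := by
      intro s hs
      rw [hG, ← measure_union (Set.Iic_disjoint_Ioc le_rfl) measurableSet_Ioc,
        Set.Iic_union_Ioc_eq_Iic hs]
    set A : ℝ≥0∞ := ∫⁻ s in S, G s ^ (n + 1) ∂ν with hA
    set C : ℝ≥0∞ := ∫⁻ s in S, G s ^ n ∂ν with hC
    set B : ℝ≥0∞ := ∫⁻ s in S, G s ^ n * ν (Set.Ioc a s) ∂ν with hB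
    -- A = G a * C + B
    have hACB : A = G a * C + B := by
      rw [hA, hC, hB, ← lintegral_const_mul _ (hGmeas.pow_const n),
        ← lintegral_add_left ((hGmeas.pow_const n).const_mul _)]
      refine setLIntegral_congr_fun hSmeas ?_
      intro s hs
      beta_reduce
      rw [pow_succ, hGdecomp s (le_of_lt hs.1)]
      ring
    -- Fubini: B = ∫⁻ w in S, ∫⁻ s in Icc w u, G s ^ n ∂ν ∂ν
    have hFmeas : Measurable (Function.uncurry fun s w : ℝ =>
        Set.indicator (Set.Ioc a s) (fun _ => G s ^ n) w) := by
      have hset : MeasurableSet {p : ℝ × ℝ | p.2 ∈ Set.Ioc a p.1} := by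
        apply MeasurableSet.inter
        · exact measurableSet_lt measurable_const measurable_snd
        · exact measurableSet_le measurable_snd measurable_fst
      have : (Function.uncurry fun s w : ℝ =>
          Set.indicator (Set.Ioc a s) (fun _ => G s ^ n) w)
          = Set.indicator {p : ℝ × ℝ | p.2 ∈ Set.Ioc a p.1}
            (fun p => G p.1 ^ n) := by
        ext ⟨s, w⟩
        simp only [Function.uncurry_apply_pair, Set.indicator_apply, Set.mem_Ioc,
          Set.mem_setOf_eq]
      rw [this]
      exact ((hGmeas.comp measurable_fst).pow_const n).indicator hset
    have hBfub : B = ∫⁻ w in S, ∫⁻ s in S,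
        Set.indicator (Set.Ioc a s) (fun _ => G s ^ n) w ∂ν ∂ν := by
      rw [hB]
      rw [← lintegral_lintegral_swap hFmeas.aemeasurable]
      refine setLIntegral_congr_fun hSmeas ?_
      intro s hs
      beta_reduce
      rw [lintegral_indicator measurableSet_Ioc]
      rw [setLIntegral_const, Measure.restrict_apply measurableSet_Ioc,
        Set.inter_eq_left.2 (show Set.Ioc a s ⊆ S from
          fun w hw => ⟨hw.1, le_trans hw.2 hs.2⟩)]
    have hBinner : ∀ w ∈ S, (∫⁻ s in S,
        Set.indicator (Set.Ioc a s) (fun _ => G s ^ n) w ∂ν)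
        = ∫⁻ s in Set.Ioc w u, G s ^ n ∂ν := by
      intro w hw
      have h1 : ∀ s : ℝ, Set.indicator (Set.Ioc a s) (fun _ => G s ^ n) w
          = Set.indicator (Set.Ici w) (fun s => G s ^ n) s := by
        intro s
        simp only [Set.indicator_apply, Set.mem_Ioc, Set.mem_Ici]
        by_cases h : w ≤ s
        · rw [if_pos ⟨hw.1, h⟩, if_pos h]
        · rw [if_neg (fun hc => h hc.2), if_neg h]
      calc (∫⁻ s in S, Set.indicator (Set.Ioc a s) (fun _ => G s ^ n) w ∂ν)
          = ∫⁻ s in S, Set.indicator (Set.Ici w) (fun s => G s ^ n) s ∂ν := by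
            exact lintegral_congr fun s => h1 s
        _ = ∫⁻ s in Set.Ici w ∩ S, G s ^ n ∂ν := by
            rw [lintegral_indicator measurableSet_Ici,
              Measure.restrict_restrict measurableSet_Ici]
        _ = ∫⁻ s in Set.Icc w u, G s ^ n ∂ν := by
            have hset2 : Set.Ici w ∩ S = Set.Icc w u := by
              ext s
              simp only [Set.mem_inter_iff, Set.mem_Ici, Set.mem_Ioc, Set.mem_Icc, hS]
              constructor
              · rintro ⟨h1, _, h3⟩; exact ⟨h1, h3⟩
              · rintro ⟨h1, h2⟩; exact ⟨h1, lt_of_lt_of_le hw.1 h1, h2⟩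
            rw [hset2]
        _ = ∫⁻ s in Set.Ioc w u, G s ^ n ∂ν :=
            (setLIntegral_congr (Ioc_ae_eq_Icc (μ := ν))).symm
    -- integrated induction hypothesis
    have hinner_meas : Measurable (fun w : ℝ => ∫⁻ s in Set.Ioc w u, G s ^ n ∂ν) := by
      apply Antitone.measurable
      intro w w' h
      exact lintegral_mono' (Measure.restrict_mono (Set.Ioc_subset_Ioc_left h) le_rfl) le_rfl
    have hIHint : (n + 1 : ℝ≥0∞) * B + A ≤ ν S * G u ^ (n + 1) := by
      have hBeq : B = ∫⁻ w in S, ∫⁻ s in Set.Ioc w u, G s ^ n ∂ν ∂ν := by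
        rw [hBfub]
        exact setLIntegral_congr_fun hSmeas hBinner
      calc (n + 1 : ℝ≥0∞) * B + A
          = ∫⁻ w in S, ((n + 1 : ℝ≥0∞) * ∫⁻ s in Set.Ioc w u, G s ^ n ∂ν
              + G w ^ (n + 1)) ∂ν := by
            rw [lintegral_add_right _ (hGmeas.pow_const (n + 1)),
              lintegral_const_mul _ hinner_meas, ← hBeq, hA]
        _ ≤ ∫⁻ _ in S, G u ^ (n + 1) ∂ν := by
            refine setLIntegral_mono' hSmeas ?_
            intro w hw
            exact IH w u hw.2
        _ = ν S * G u ^ (n + 1) := by rw [setLIntegral_const, mul_comm]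
    -- assemble
    have hassemble : ((n : ℝ≥0∞) + 1 + 1) * A + G a ^ (n + 1 + 1)
        = G a * ((n + 1 : ℝ≥0∞) * C + G a ^ (n + 1)) + ((n + 1 : ℝ≥0∞) * B + A) := by
      rw [hACB]; ring
    have hfinal : ((n : ℝ≥0∞) + 1 + 1) * A + G a ^ (n + 1 + 1)
        ≤ G u ^ (n + 1 + 1) := by
      rw [hassemble]
      calc G a * ((n + 1 : ℝ≥0∞) * C + G a ^ (n + 1)) + ((n + 1 : ℝ≥0∞) * B + A)
          ≤ G a * G u ^ (n + 1) + ν S * G u ^ (n + 1) :=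
            add_le_add (mul_le_mul_right (IH a u hau) _) hIHint
        _ = (G a + ν S) * G u ^ (n + 1) := by ring
        _ = G u ^ (n + 1 + 1) := by
            rw [hGdecomp u hau]
            ring
    convert hfinal using 2 <;> push_cast <;> ring


/-- **Time-changed Gronwall inequality (pathwise form).**
If `E` is a nondecreasing continuous function with `E 0 = 0` (a `StieltjesFunction`
with Lebesgue–Stieltjes measure `E.measure`), `x` is a nonnegative bounded Borel
function on `[0, T]`, `K` is a nonnegative Borel function integrable with respect to
`dE` on `(0, T]`, `u₀ ≥ 0`, and
`x t ≤ u₀ + ∫_{(0,t]} K s * x s dE` for all `t ∈ [0, T]`, then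
`x t ≤ u₀ * exp (∫_{(0,t]} K s dE)` for all `t ∈ [0, T]`. -/
theorem timeChanged_gronwall
    (E : StieltjesFunction ℝ) (hEcont : Continuous E) (hE0 : E 0 = 0)
    (T : ℝ) (hT : 0 < T)
    (x K : ℝ → ℝ)
    (hxmeas : Measurable x)
    (hxnonneg : ∀ t ∈ Set.Icc (0 : ℝ) T, 0 ≤ x t)
    (hxbdd : ∃ M : ℝ, ∀ t ∈ Set.Icc (0 : ℝ) T, x t ≤ M)
    (hKmeas : Measurable K)
    (hKnonneg : ∀ t ∈ Set.Icc (0 : ℝ) T, 0 ≤ K t)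
    (hKint : IntegrableOn K (Set.Ioc 0 T) E.measure)
    (u₀ : ℝ) (hu₀ : 0 ≤ u₀)
    (hineq : ∀ t ∈ Set.Icc (0 : ℝ) T,
      x t ≤ u₀ + ∫ s in Set.Ioc 0 t, K s * x s ∂E.measure) :
    ∀ t ∈ Set.Icc (0 : ℝ) T,
      x t ≤ u₀ * Real.exp (∫ s in Set.Ioc 0 t, K s ∂E.measure) := by
  classical
  obtain ⟨M, hM⟩ := hxbdd
  set M₀ : ℝ := max M 0 with hM₀def
  have hM₀ : ∀ t ∈ Set.Icc (0 : ℝ) T, x t ≤ M₀ :=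
    fun t ht => le_trans (hM t ht) (le_max_left _ _)
  have hM₀nonneg : 0 ≤ M₀ := le_max_right _ _
  -- E.measure has no atoms
  haveI hNoAtomsE : NullSingletonClass E.measure := by
    constructor
    intro a
    rw [E.measure_singleton]
    have hne : (𝓝[<] a).NeBot := inferInstance
    have hll : Function.leftLim E a = E a :=
      leftLim_eq_of_tendsto
        ((hEcont.tendsto a).mono_left nhdsWithin_le_nhds)
    rw [hll, sub_self, ENNReal.ofReal_zero]
  set Kf : ℝ → ℝ≥0∞ := fun s => ENNReal.ofReal (K s) with hKf
  have hKfmeas : Measurable Kf := hKmeas.ennreal_ofReal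
  set ν : Measure ℝ := (E.measure.withDensity Kf).restrict (Set.Ioc 0 T) with hν
  -- ν (Iic t) in terms of lintegral
  have hνIic : ∀ t ∈ Set.Icc (0 : ℝ) T,
      ν (Set.Iic t) = ∫⁻ s in Set.Ioc 0 t, Kf s ∂E.measure := by
    intro t ht
    rw [hν, Measure.restrict_apply measurableSet_Iic]
    have h1 : Set.Iic t ∩ Set.Ioc 0 T = Set.Ioc 0 t := by
      ext s
      simp only [Set.mem_inter_iff, Set.mem_Iic, Set.mem_Ioc]
      exact ⟨fun ⟨h1, h2, _⟩ => ⟨h2, h1⟩, fun ⟨h1, h2⟩ => ⟨h2, h1, le_trans h2 ht.2⟩⟩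
    rw [h1, withDensity_apply _ measurableSet_Ioc]
  -- finiteness of ν
  haveI hνfin : IsFiniteMeasure ν := by
    constructor
    rw [hν, Measure.restrict_apply MeasurableSet.univ, Set.univ_inter,
      withDensity_apply _ measurableSet_Ioc]
    exact (hasFiniteIntegral_iff_ofReal
      (ae_restrict_of_forall_mem measurableSet_Ioc
        (fun s hs => hKnonneg s ⟨le_of_lt hs.1, hs.2⟩))).1 hKint.2
  -- ν has no atoms
  haveI hνatoms : NullSingletonClass ν := by
    constructor
    intro a
    rw [hν, Measure.restrict_apply (measurableSet_singleton a)]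
    refine le_antisymm ?_ zero_le
    calc (E.measure.withDensity Kf) ({a} ∩ Set.Ioc 0 T)
        ≤ (E.measure.withDensity Kf) {a} := measure_mono Set.inter_subset_left
      _ = 0 := (withDensity_absolutelyContinuous E.measure Kf) (measure_singleton a)
  -- the function g
  set g : ℝ → ℝ := fun s => (ν (Set.Iic s)).toReal with hgdef
  have hgmono : Monotone g := fun s t h =>
    ENNReal.toReal_mono (measure_ne_top ν _) (measure_mono (Set.Iic_subset_Iic.2 h))
  have hgmeas : Measurable g := hgmono.measurable
  have hgnonneg : ∀ s, 0 ≤ g s := fun s => ENNReal.toReal_nonneg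
  have hgofReal : ∀ s, ENNReal.ofReal (g s) = ν (Set.Iic s) := fun s =>
    ENNReal.ofReal_toReal (measure_ne_top ν _)
  -- relating g to the integral of K
  have hgint : ∀ t ∈ Set.Icc (0 : ℝ) T, (∫ s in Set.Ioc 0 t, K s ∂E.measure) = g t := by
    intro t ht
    have hKi : IntegrableOn K (Set.Ioc 0 t) E.measure :=
      hKint.mono_set (Set.Ioc_subset_Ioc_right ht.2)
    have hnn : 0 ≤ᵐ[E.measure.restrict (Set.Ioc 0 t)] K :=
      ae_restrict_of_forall_mem measurableSet_Ioc
        (fun s hs => hKnonneg s ⟨le_of_lt hs.1, le_trans hs.2 ht.2⟩)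
    have h1 : ENNReal.ofReal (∫ s in Set.Ioc 0 t, K s ∂E.measure)
        = ∫⁻ s in Set.Ioc 0 t, Kf s ∂E.measure :=
      ofReal_integral_eq_lintegral_ofReal hKi hnn
    calc (∫ s in Set.Ioc 0 t, K s ∂E.measure)
        = (ENNReal.ofReal (∫ s in Set.Ioc 0 t, K s ∂E.measure)).toReal :=
          (ENNReal.toReal_ofReal (integral_nonneg_of_ae hnn)).symm
      _ = g t := by rw [h1, hgdef, ← hνIic t ht]
  -- subset helper
  have hsub : ∀ t ∈ Set.Icc (0 : ℝ) T, Set.Ioc (0 : ℝ) t ⊆ Set.Icc 0 T :=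
    fun t ht s hs => ⟨le_of_lt hs.1, le_trans hs.2 ht.2⟩
  -- integrability of K * g^k
  have hIntK : ∀ t ∈ Set.Icc (0 : ℝ) T, ∀ k : ℕ,
      IntegrableOn (fun s => K s * g s ^ k) (Set.Ioc 0 t) E.measure := by
    intro t ht k
    have hKi : IntegrableOn K (Set.Ioc 0 t) E.measure :=
      hKint.mono_set (Set.Ioc_subset_Ioc_right ht.2)
    refine Integrable.mono (hKi.const_mul (g T ^ k))
      ((hKmeas.mul (hgmeas.pow_const k)).aestronglyMeasurable) ?_
    refine ae_restrict_of_forall_mem measurableSet_Ioc fun s hs => ?_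
    have h1 : 0 ≤ K s := hKnonneg s (hsub t ht hs)
    have h2 : g s ^ k ≤ g T ^ k :=
      pow_le_pow_left₀ (hgnonneg s) (hgmono (le_trans hs.2 ht.2)) k
    rw [Real.norm_eq_abs, Real.norm_eq_abs, abs_mul, abs_mul,
      abs_of_nonneg h1, abs_of_nonneg (pow_nonneg (hgnonneg s) k)]
    calc K s * g s ^ k ≤ K s * g T ^ k := mul_le_mul_of_nonneg_left h2 h1
      _ ≤ |g T ^ k| * K s := by
          rw [mul_comm]
          exact mul_le_mul_of_nonneg_right (le_abs_self _) h1
  -- integrability of K * x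
  have hIntx : ∀ t ∈ Set.Icc (0 : ℝ) T,
      IntegrableOn (fun s => K s * x s) (Set.Ioc 0 t) E.measure := by
    intro t ht
    have hKi : IntegrableOn K (Set.Ioc 0 t) E.measure :=
      hKint.mono_set (Set.Ioc_subset_Ioc_right ht.2)
    refine Integrable.mono (hKi.const_mul M₀)
      ((hKmeas.mul hxmeas).aestronglyMeasurable) ?_
    refine ae_restrict_of_forall_mem measurableSet_Ioc fun s hs => ?_
    have h1 : 0 ≤ K s := hKnonneg s (hsub t ht hs)
    have h2 : x s ≤ M₀ := hM₀ s (hsub t ht hs)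
    have h3 : 0 ≤ x s := hxnonneg s (hsub t ht hs)
    rw [Real.norm_eq_abs, Real.norm_eq_abs, abs_mul, abs_mul,
      abs_of_nonneg h1, abs_of_nonneg h3]
    calc K s * x s ≤ K s * M₀ := mul_le_mul_of_nonneg_left h2 h1
      _ ≤ |M₀| * K s := by
          rw [mul_comm]
          exact mul_le_mul_of_nonneg_right (le_abs_self _) h1
  -- the key integral inequality
  have hkey : ∀ t ∈ Set.Icc (0 : ℝ) T, ∀ k : ℕ,
      (∫ s in Set.Ioc 0 t, K s * g s ^ k ∂E.measure) ≤ g t ^ (k + 1) / (k + 1) := by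
    intro t ht k
    have hnn : 0 ≤ᵐ[E.measure.restrict (Set.Ioc 0 t)] fun s => K s * g s ^ k :=
      ae_restrict_of_forall_mem measurableSet_Ioc fun s hs =>
        mul_nonneg (hKnonneg s (hsub t ht hs)) (pow_nonneg (hgnonneg s) k)
    rw [integral_eq_lintegral_of_nonneg_ae hnn
      ((hKmeas.mul (hgmeas.pow_const k)).aestronglyMeasurable)]
    have hl1 : (∫⁻ s in Set.Ioc 0 t, ENNReal.ofReal (K s * g s ^ k) ∂E.measure)
        = ∫⁻ s in Set.Ioc 0 t, Kf s * (ν (Set.Iic s)) ^ k ∂E.measure := by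
      refine setLIntegral_congr_fun measurableSet_Ioc
        (fun s hs => ?_)
      rw [ENNReal.ofReal_mul (hKnonneg s (hsub t ht hs)),
        ENNReal.ofReal_pow (hgnonneg s), hgofReal s]
    have hmeaspow : Measurable fun s : ℝ => (ν (Set.Iic s)) ^ k :=
      (Monotone.measurable fun a b h =>
        measure_mono (Set.Iic_subset_Iic.2 h)).pow_const k
    have hl2 : (∫⁻ s in Set.Ioc 0 t, Kf s * (ν (Set.Iic s)) ^ k ∂E.measure)
        = ∫⁻ s in Set.Ioc 0 t, (ν (Set.Iic s)) ^ k ∂ν := by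
      conv_rhs => rw [hν]
      rw [Measure.restrict_restrict measurableSet_Ioc,
        Set.inter_eq_left.2 (Set.Ioc_subset_Ioc_right ht.2),
        restrict_withDensity measurableSet_Ioc,
        lintegral_withDensity_eq_lintegral_mul _ hKfmeas hmeaspow]
      rfl
    have h0 : ν (Set.Iic 0) = 0 := by
      rw [hν, Measure.restrict_apply measurableSet_Iic]
      have : Set.Iic (0 : ℝ) ∩ Set.Ioc 0 T = ∅ :=
        Set.eq_empty_iff_forall_notMem.2
          (fun s hs => absurd (lt_of_lt_of_le hs.2.1 hs.1) (lt_irrefl 0))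
      rw [this, measure_empty]
    have hk := gron_key ν k 0 t ht.1
    rw [h0, zero_pow (Nat.succ_ne_zero k), add_zero] at hk
    have hk1ne : ((k : ℝ≥0∞) + 1) ≠ 0 := by
      simp
    have hk1top : ((k : ℝ≥0∞) + 1) ≠ ⊤ :=
      ENNReal.add_ne_top.2 ⟨ENNReal.natCast_ne_top k, ENNReal.one_ne_top⟩
    have hle : (∫⁻ s in Set.Ioc 0 t, (ν (Set.Iic s)) ^ k ∂ν)
        ≤ (ν (Set.Iic t)) ^ (k + 1) / ((k : ℝ≥0∞) + 1) := by
      rw [ENNReal.le_div_iff_mul_le (Or.inl hk1ne) (Or.inl hk1top), mul_comm]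
      exact hk
    have hfin : (ν (Set.Iic t)) ^ (k + 1) / ((k : ℝ≥0∞) + 1) ≠ ⊤ :=
      (ENNReal.div_lt_top (ENNReal.pow_ne_top (measure_ne_top ν _)) hk1ne).ne
    calc (∫⁻ s in Set.Ioc 0 t, ENNReal.ofReal (K s * g s ^ k) ∂E.measure).toReal
        ≤ ((ν (Set.Iic t)) ^ (k + 1) / ((k : ℝ≥0∞) + 1)).toReal := by
          rw [hl1, hl2]
          exact ENNReal.toReal_mono hfin hle
      _ = g t ^ (k + 1) / (k + 1) := by
          have hcast : ((k : ℝ≥0∞) + 1).toReal = (k : ℝ) + 1 := by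
            rw [ENNReal.toReal_add (by simp) (by simp), ENNReal.toReal_natCast,
              ENNReal.toReal_one]
          rw [ENNReal.toReal_div, ENNReal.toReal_pow, hcast]
  -- the iteration
  have hiter : ∀ n : ℕ, ∀ t ∈ Set.Icc (0 : ℝ) T,
      x t ≤ u₀ * (∑ k ∈ Finset.range n, g t ^ k / (k.factorial : ℝ))
        + M₀ * (g t ^ n / (n.factorial : ℝ)) := by
    intro n
    induction n with
    | zero =>
      intro t ht
      simpa using hM₀ t ht
    | succ n IH =>
      intro t ht
      -- the comparison function
      have hcomb : ∀ s : ℝ,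
          K s * (u₀ * (∑ k ∈ Finset.range n, g s ^ k / (k.factorial : ℝ))
            + M₀ * (g s ^ n / (n.factorial : ℝ)))
          = (∑ k ∈ Finset.range n, (u₀ / (k.factorial : ℝ)) * (K s * g s ^ k))
            + (M₀ / (n.factorial : ℝ)) * (K s * g s ^ n) := by
        intro s
        rw [mul_add, Finset.mul_sum, Finset.mul_sum]
        congr 1
        · exact Finset.sum_congr rfl fun k _ => by ring
        · ring
      have hInt1 : IntegrableOn
          (fun s => (∑ k ∈ Finset.range n, (u₀ / (k.factorial : ℝ)) * (K s * g s ^ k))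
            + (M₀ / (n.factorial : ℝ)) * (K s * g s ^ n)) (Set.Ioc 0 t) E.measure := by
        refine Integrable.add ?_ ((hIntK t ht n).const_mul _)
        exact integrable_finset_sum _ fun k _ => (hIntK t ht k).const_mul _
      have hmono : (∫ s in Set.Ioc 0 t, K s * x s ∂E.measure)
          ≤ ∫ s in Set.Ioc 0 t,
              ((∑ k ∈ Finset.range n, (u₀ / (k.factorial : ℝ)) * (K s * g s ^ k))
                + (M₀ / (n.factorial : ℝ)) * (K s * g s ^ n)) ∂E.measure := by
        refine setIntegral_mono_on (hIntx t ht) hInt1 measurableSet_Ioc fun s hs => ?_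
        rw [← hcomb s]
        exact mul_le_mul_of_nonneg_left (IH s (hsub t ht hs)) (hKnonneg s (hsub t ht hs))
      have hsplit : (∫ s in Set.Ioc 0 t,
            ((∑ k ∈ Finset.range n, (u₀ / (k.factorial : ℝ)) * (K s * g s ^ k))
              + (M₀ / (n.factorial : ℝ)) * (K s * g s ^ n)) ∂E.measure)
          = (∑ k ∈ Finset.range n, (u₀ / (k.factorial : ℝ))
                * ∫ s in Set.Ioc 0 t, K s * g s ^ k ∂E.measure)
            + (M₀ / (n.factorial : ℝ)) * ∫ s in Set.Ioc 0 t, K s * g s ^ n ∂E.measure := by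
        rw [integral_add (integrable_finset_sum _ fun k _ => (hIntK t ht k).const_mul _)
          ((hIntK t ht n).const_mul _),
          integral_finset_sum _ fun k _ => (hIntK t ht k).const_mul _,
          integral_const_mul]
        congr 1
        exact Finset.sum_congr rfl fun k _ => integral_const_mul _ _
      have hbound : (∑ k ∈ Finset.range n, (u₀ / (k.factorial : ℝ))
            * ∫ s in Set.Ioc 0 t, K s * g s ^ k ∂E.measure)
            + (M₀ / (n.factorial : ℝ)) * ∫ s in Set.Ioc 0 t, K s * g s ^ n ∂E.measure
          ≤ (∑ k ∈ Finset.range n, (u₀ / (k.factorial : ℝ)) * (g t ^ (k + 1) / (k + 1)))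
            + (M₀ / (n.factorial : ℝ)) * (g t ^ (n + 1) / (n + 1)) := by
        refine add_le_add (Finset.sum_le_sum fun k _ => ?_) ?_
        · exact mul_le_mul_of_nonneg_left (hkey t ht k)
            (div_nonneg hu₀ (Nat.cast_nonneg _))
        · exact mul_le_mul_of_nonneg_left (hkey t ht n)
            (div_nonneg hM₀nonneg (Nat.cast_nonneg _))
      have halg : u₀ + ((∑ k ∈ Finset.range n,
            (u₀ / (k.factorial : ℝ)) * (g t ^ (k + 1) / (k + 1)))
            + (M₀ / (n.factorial : ℝ)) * (g t ^ (n + 1) / (n + 1)))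
          = u₀ * (∑ k ∈ Finset.range (n + 1), g t ^ k / (k.factorial : ℝ))
            + M₀ * (g t ^ (n + 1) / ((n + 1).factorial : ℝ)) := by
        have hfac : ∀ k : ℕ, ((k + 1).factorial : ℝ) = (k + 1) * (k.factorial : ℝ) := by
          intro k
          rw [Nat.factorial_succ]
          push_cast
          ring
        have hterm : ∀ (c : ℝ) (k : ℕ), (c / (k.factorial : ℝ)) * (g t ^ (k + 1) / (k + 1))
            = c * (g t ^ (k + 1) / ((k + 1).factorial : ℝ)) := by
          intro c k
          rw [hfac k, div_mul_div_comm, mul_div_assoc, mul_comm ((k.factorial : ℝ))]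
        rw [Finset.sum_range_succ',
          Finset.sum_congr rfl fun k _ => hterm u₀ k, ← Finset.mul_sum, hterm M₀ n]
        simp only [pow_zero, Nat.factorial_zero, Nat.cast_one, div_one]
        ring
      calc x t ≤ u₀ + ∫ s in Set.Ioc 0 t, K s * x s ∂E.measure := hineq t ht
        _ ≤ u₀ + ((∑ k ∈ Finset.range n,
              (u₀ / (k.factorial : ℝ)) * (g t ^ (k + 1) / (k + 1)))
              + (M₀ / (n.factorial : ℝ)) * (g t ^ (n + 1) / (n + 1))) := by
            refine add_le_add_right ?_ u₀
            calc (∫ s in Set.Ioc 0 t, K s * x s ∂E.measure)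
                ≤ _ := hmono
              _ = _ := hsplit
              _ ≤ _ := hbound
        _ = u₀ * (∑ k ∈ Finset.range (n + 1), g t ^ k / (k.factorial : ℝ))
              + M₀ * (g t ^ (n + 1) / ((n + 1).factorial : ℝ)) := halg
  -- passing to the limit
  intro t ht
  rw [hgint t ht]
  have hS : Filter.Tendsto (fun n : ℕ => ∑ k ∈ Finset.range n, g t ^ k / (k.factorial : ℝ))
      Filter.atTop (nhds (Real.exp (g t))) := by
    have h := (NormedSpace.expSeries_div_hasSum_exp (g t)).tendsto_sum_nat
    rw [Real.exp_eq_exp_ℝ]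
    exact h
  have hR : Filter.Tendsto (fun n : ℕ => g t ^ n / (n.factorial : ℝ))
      Filter.atTop (nhds 0) :=
    FloorSemiring.tendsto_pow_div_factorial_atTop (g t)
  have hlim : Filter.Tendsto (fun n : ℕ =>
      u₀ * (∑ k ∈ Finset.range n, g t ^ k / (k.factorial : ℝ))
        + M₀ * (g t ^ n / (n.factorial : ℝ)))
      Filter.atTop (nhds (u₀ * Real.exp (g t) + M₀ * 0)) :=
    ((hS.const_mul u₀).add (hR.const_mul M₀))
  rw [mul_zero, add_zero] at hlim
  exact ge_of_tendsto' hlim fun n => hiter n t ht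
end

section
/- Let A be an n×n real matrix all of whose eigenvalues (as a matrix over ℂ) have strictly negative real part. Then there exist constants K > 0 and λ > 0 such that ‖exp(tA)‖ ≤ K·exp(−λt) for all t ≥ 0, where exp(tA) is the matrix exponential and ‖·‖ is the operator norm. -/
open scoped Matrix.Norms.L2Operator
open scoped InnerProductSpace
open Matrix NormedSpace Polynomial

section Auxiliary

/-- Every element of the spectrum of a complex matrix admits an eigenvector. -/
theorem matrixExpDecayAux_eigvec_of_mem_spectrum {n : ℕ} (M : Matrix (Fin n) (Fin n) ℂ) {μ : ℂ}
    (h : μ ∈ spectrum ℂ M) : ∃ v : Fin n → ℂ, v ≠ 0 ∧ M *ᵥ v = μ • v := by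
  rw [spectrum.mem_iff, Matrix.isUnit_iff_isUnit_det, isUnit_iff_ne_zero, not_not,
    ← Matrix.exists_mulVec_eq_zero_iff] at h
  obtain ⟨v, hv, hv2⟩ := h
  refine ⟨v, hv, ?_⟩
  rw [Matrix.sub_mulVec] at hv2
  have h1 : (algebraMap ℂ (Matrix (Fin n) (Fin n) ℂ) μ) *ᵥ v = μ • v := by
    simp [Algebra.algebraMap_eq_smul_one, Matrix.smul_mulVec, Matrix.one_mulVec]
  rw [h1, sub_eq_zero] at hv2
  exact hv2.symm

theorem matrixExpDecayAux_mulVec_pow_eig {n : ℕ} {M : Matrix (Fin n) (Fin n) ℂ} {μ : ℂ}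
    {v : Fin n → ℂ} (hv : M *ᵥ v = μ • v) (k : ℕ) : (M ^ k) *ᵥ v = (μ ^ k) • v := by
  induction k with
  | zero => simp
  | succ k ih =>
      rw [pow_succ', ← Matrix.mulVec_mulVec, ih, Matrix.mulVec_smul, hv, smul_smul, ← pow_succ]

theorem matrixExpDecayAux_mulVec_aeval_eig {n : ℕ} {M : Matrix (Fin n) (Fin n) ℂ} {μ : ℂ}
    {v : Fin n → ℂ} (hv : M *ᵥ v = μ • v) (p : ℂ[X]) :
    (aeval M p) *ᵥ v = (p.eval μ) • v := by
  induction p using Polynomial.induction_on' with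
  | add p q hp hq => rw [map_add, Matrix.add_mulVec, hp, hq, eval_add, add_smul]
  | monomial k a =>
      rw [aeval_monomial, eval_monomial, ← Matrix.mulVec_mulVec,
        matrixExpDecayAux_mulVec_pow_eig hv,
        Matrix.mulVec_smul, Algebra.algebraMap_eq_smul_one, Matrix.smul_mulVec,
        Matrix.one_mulVec, smul_smul, mul_comm]

theorem matrixExpDecayAux_mulVec_exp_eig {n : ℕ} {M : Matrix (Fin n) (Fin n) ℂ} {μ : ℂ}
    {v : Fin n → ℂ} (hv : M *ᵥ v = μ • v) :
    (NormedSpace.exp M) *ᵥ v = (Complex.exp μ) • v := by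
  classical
  let L : Matrix (Fin n) (Fin n) ℂ →ₗ[ℂ] (Fin n → ℂ) :=
    { toFun := fun N => N *ᵥ v
      map_add' := fun N₁ N₂ => Matrix.add_mulVec N₁ N₂ v
      map_smul' := fun c N => Matrix.smul_mulVec c N v }
  have hL : Continuous L := L.continuous_of_finiteDimensional
  have h1 : HasSum (fun k : ℕ => ((k.factorial : ℂ)⁻¹ • M ^ k)) (NormedSpace.exp M) :=
    NormedSpace.exp_series_hasSum_exp' M
  have h2 := h1.map L hL
  have h3 : HasSum (fun k : ℕ => ((k.factorial : ℂ)⁻¹ * μ ^ k) • v)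
      ((Complex.exp μ) • v) := by
    have h4 : HasSum (fun k : ℕ => ((k.factorial : ℂ)⁻¹ • μ ^ k)) (NormedSpace.exp μ) :=
      NormedSpace.exp_series_hasSum_exp' μ
    simpa [smul_eq_mul, Complex.exp_eq_exp_ℂ] using h4.smul_const v
  have h2' : HasSum (fun k : ℕ => ((k.factorial : ℂ)⁻¹ * μ ^ k) • v) (NormedSpace.exp M *ᵥ v) := by
    have h5 : (⇑L ∘ fun k : ℕ => ((k.factorial : ℂ)⁻¹ • M ^ k))
        = fun k : ℕ => ((k.factorial : ℂ)⁻¹ * μ ^ k) • v := by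
      funext k
      show ((k.factorial : ℂ)⁻¹ • M ^ k) *ᵥ v = _
      rw [Matrix.smul_mulVec, matrixExpDecayAux_mulVec_pow_eig hv, smul_smul]
    rw [h5] at h2
    exact h2
  exact h2'.unique h3

set_option maxHeartbeats 1000000 in
/-- In finite dimensions, the exponential of a matrix is a polynomial in the matrix. -/
theorem matrixExpDecayAux_exists_aeval_eq_exp {n : ℕ} (M : Matrix (Fin n) (Fin n) ℂ) :
    ∃ p : ℂ[X], aeval M p = NormedSpace.exp M := by
  have hmem : NormedSpace.exp M ∈ Algebra.adjoin ℂ ({M} : Set (Matrix (Fin n) (Fin n) ℂ)) := by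
    have hclosed : IsClosed ((Subalgebra.toSubmodule
        (Algebra.adjoin ℂ ({M} : Set (Matrix (Fin n) (Fin n) ℂ)))) :
        Set (Matrix (Fin n) (Fin n) ℂ)) :=
      Submodule.closed_of_finiteDimensional _
    have h1 : HasSum (fun k : ℕ => ((k.factorial : ℂ)⁻¹ • M ^ k)) (NormedSpace.exp M) :=
      NormedSpace.exp_series_hasSum_exp' M
    have h2 := h1.tendsto_sum_nat
    have hmem' : ∀ K : ℕ, (∑ k ∈ Finset.range K, ((k.factorial : ℂ)⁻¹ • M ^ k)) ∈
        Algebra.adjoin ℂ ({M} : Set (Matrix (Fin n) (Fin n) ℂ)) := by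
      intro K
      refine Subalgebra.sum_mem _ fun k _ => Subalgebra.smul_mem _ ?_ _
      exact Subalgebra.pow_mem _ (Algebra.subset_adjoin (Set.mem_singleton M)) k
    exact hclosed.mem_of_tendsto h2 (Filter.Eventually.of_forall hmem')
  rw [Algebra.adjoin_singleton_eq_range_aeval] at hmem
  exact hmem

/-- Spectral mapping theorem for the matrix exponential. -/
theorem matrixExpDecayAux_spectrum_exp_eq {n : ℕ} [NeZero n] (M : Matrix (Fin n) (Fin n) ℂ) :
    spectrum ℂ (NormedSpace.exp M) = Complex.exp '' spectrum ℂ M := by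
  obtain ⟨p, hp⟩ := matrixExpDecayAux_exists_aeval_eq_exp M
  have hne : (spectrum ℂ M).Nonempty := spectrum.nonempty M
  have hmap := spectrum.map_polynomial_aeval_of_nonempty M p hne
  rw [hp] at hmap
  rw [hmap]
  refine Set.image_congr fun μ hμ => ?_
  obtain ⟨v, hv0, hv⟩ := matrixExpDecayAux_eigvec_of_mem_spectrum M hμ
  have h1 := matrixExpDecayAux_mulVec_aeval_eig hv p
  rw [hp, matrixExpDecayAux_mulVec_exp_eig hv] at h1
  obtain ⟨i, hi⟩ := Function.ne_iff.mp hv0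
  have h2 := congrFun h1 i
  simp only [Pi.smul_apply, smul_eq_mul] at h2
  exact (mul_right_cancel₀ hi h2).symm

/-- Geometric decay of powers when the spectrum lies in the open disc of radius `r`. -/
theorem matrixExpDecayAux_pow_norm_decay {n : ℕ} [NeZero n] (E : Matrix (Fin n) (Fin n) ℂ)
    {r : ℝ} (hr0 : 0 < r) (hr : ∀ ν ∈ spectrum ℂ E, ‖ν‖ < r) :
    ∃ C : ℝ, 0 < C ∧ ∀ k : ℕ, ‖E ^ k‖ ≤ C * r ^ k := by
  have hρ : spectralRadius ℂ E < ENNReal.ofReal r := by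
    have h := spectrum.spectralRadius_lt_of_forall_lt_of_nonempty (spectrum.nonempty E)
      (r := r.toNNReal) (fun ν hν => ?_)
    · rwa [ENNReal.ofReal]
    · rw [← norm_toNNReal]
      exact Real.toNNReal_lt_toNNReal_iff hr0 |>.mpr (hr ν hν)
  have hG := spectrum.pow_nnnorm_pow_one_div_tendsto_nhds_spectralRadius E
  have hev : ∀ᶠ k : ℕ in Filter.atTop,
      (‖E ^ k‖₊ : ENNReal) ^ (1 / (k : ℝ)) < ENNReal.ofReal r :=
    hG.eventually_lt_const hρ
  obtain ⟨N, hN⟩ := Filter.eventually_atTop.mp hev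
  have key : ∀ k : ℕ, N ≤ k → 1 ≤ k → ‖E ^ k‖ ≤ r ^ k := by
    intro k hk1 hk2
    have h := hN k hk1
    have hkne : (k : ℝ) ≠ 0 := Nat.cast_ne_zero.mpr (by omega)
    have h2 : (((‖E ^ k‖₊ : ENNReal) ^ (1 / (k : ℝ))) ^ (k : ℝ))
        < (ENNReal.ofReal r) ^ (k : ℝ) :=
      ENNReal.rpow_lt_rpow h (by positivity)
    rw [← ENNReal.rpow_mul, one_div_mul_cancel hkne, ENNReal.rpow_one] at h2
    rw [ENNReal.ofReal_rpow_of_pos hr0] at h2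
    have h3 : (‖E ^ k‖₊ : ℝ) < r ^ (k : ℝ) := by
      have := (ENNReal.lt_ofReal_iff_toReal_lt (by simp)).mp h2
      simpa using this
    rw [Real.rpow_natCast] at h3
    exact le_of_lt h3
  set K := max N 1 with hK
  refine ⟨(max 1 (‖E‖ / r)) ^ K, by positivity, fun k => ?_⟩
  have hmax1 : (1 : ℝ) ≤ max 1 (‖E‖ / r) := le_max_left _ _
  have hmaxK : (1 : ℝ) ≤ (max 1 (‖E‖ / r)) ^ K := one_le_pow₀ hmax1
  by_cases hk : K ≤ k
  · have h1 : ‖E ^ k‖ ≤ r ^ k :=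
      key k (le_trans (le_max_left _ _) hk) (le_trans (le_max_right _ _) hk)
    have h2 : r ^ k ≤ (max 1 (‖E‖ / r)) ^ K * r ^ k := by
      nlinarith [pow_pos hr0 k]
    linarith
  · push_neg at hk
    rcases Nat.eq_zero_or_pos k with hk0 | hk0
    · subst hk0
      simpa using hmaxK
    · have h1 : ‖E ^ k‖ ≤ ‖E‖ ^ k := norm_pow_le' E hk0
      have hE : ‖E‖ ≤ r * max 1 (‖E‖ / r) := by
        have h6 : r * (‖E‖ / r) ≤ r * max 1 (‖E‖ / r) := by
          have := le_max_right (1:ℝ) (‖E‖ / r)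
          nlinarith
        rw [mul_div_cancel₀ _ (ne_of_gt hr0)] at h6
        exact h6
      have h2 : ‖E‖ ^ k ≤ (r * max 1 (‖E‖ / r)) ^ k :=
        pow_le_pow_left₀ (norm_nonneg _) hE k
      have h3 : (r * max 1 (‖E‖ / r)) ^ k = r ^ k * (max 1 (‖E‖ / r)) ^ k := mul_pow _ _ _
      have h4 : (max 1 (‖E‖ / r)) ^ k ≤ (max 1 (‖E‖ / r)) ^ K :=
        pow_le_pow_right₀ hmax1 (le_of_lt hk)
      have h5 : (0:ℝ) < r ^ k := pow_pos hr0 k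
      calc ‖E ^ k‖ ≤ r ^ k * (max 1 (‖E‖ / r)) ^ k := by rw [← h3]; exact le_trans h1 h2
        _ ≤ (max 1 (‖E‖ / r)) ^ K * r ^ k := by nlinarith

theorem matrixExpDecayAux_euclid_coord_le {𝕜 : Type*} [RCLike 𝕜] {ι : Type*} [Fintype ι]
    [DecidableEq ι] (x : EuclideanSpace 𝕜 ι) (j : ι) : ‖x j‖ ≤ ‖x‖ := by
  have h1 : ⟪EuclideanSpace.single j (1 : 𝕜), x⟫_𝕜 = x j := by
    rw [EuclideanSpace.inner_single_left]; simp
  have h2 := norm_inner_le_norm (𝕜 := 𝕜) (EuclideanSpace.single j (1 : 𝕜)) x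
  rw [h1, EuclideanSpace.norm_single, norm_one, one_mul] at h2
  exact h2

theorem matrixExpDecayAux_euclid_norm_le_sum {𝕜 : Type*} [RCLike 𝕜] {ι : Type*} [Fintype ι]
    [DecidableEq ι] (x : EuclideanSpace 𝕜 ι) : ‖x‖ ≤ ∑ i, ‖x i‖ := by
  rw [EuclideanSpace.norm_eq]
  have h1 : ∑ i, ‖x i‖ ^ 2 ≤ (∑ i, ‖x i‖) ^ 2 :=
    Finset.sum_sq_le_sq_sum_of_nonneg fun i _ => norm_nonneg _
  calc Real.sqrt (∑ i, ‖x i‖ ^ 2) ≤ Real.sqrt ((∑ i, ‖x i‖) ^ 2) := Real.sqrt_le_sqrt h1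
    _ = ∑ i, ‖x i‖ := Real.sqrt_sq (Finset.sum_nonneg fun i _ => norm_nonneg _)

theorem matrixExpDecayAux_entry_le_l2_opNorm {𝕜 : Type*} [RCLike 𝕜] {m k : Type*} [Fintype m]
    [Fintype k] [DecidableEq m] [DecidableEq k] (M : Matrix m k 𝕜) (i : m) (j : k) :
    ‖M i j‖ ≤ ‖M‖ := by
  have h := M.l2_opNorm_mulVec (EuclideanSpace.single j (1 : 𝕜))
  rw [EuclideanSpace.norm_single, norm_one, mul_one] at h
  refine le_trans ?_ h
  have h2 := matrixExpDecayAux_euclid_coord_le ((EuclideanSpace.equiv m 𝕜).symm <|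
    M *ᵥ (EuclideanSpace.single j (1 : 𝕜))) i
  refine le_trans ?_ h2
  have h3 : ((EuclideanSpace.equiv m 𝕜).symm <|
      M *ᵥ (EuclideanSpace.single j (1 : 𝕜))) i = M i j := by
    show (M *ᵥ (EuclideanSpace.single j (1 : 𝕜)) : m → 𝕜) i = M i j
    have h4 : (EuclideanSpace.single j (1 : 𝕜) : k → 𝕜) = Pi.single j 1 := rfl
    rw [h4, Matrix.mulVec_single]; simp
  rw [h3]

theorem matrixExpDecayAux_l2_opNorm_le_sum {𝕜 : Type*} [RCLike 𝕜] {m k : Type*} [Fintype m]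
    [Fintype k] [DecidableEq m] [DecidableEq k] (M : Matrix m k 𝕜) :
    ‖M‖ ≤ ∑ i, ∑ j, ‖M i j‖ := by
  rw [Matrix.l2_opNorm_def]
  refine ContinuousLinearMap.opNorm_le_bound _
    (Finset.sum_nonneg fun i _ => Finset.sum_nonneg fun j _ => norm_nonneg _) fun x => ?_
  have happ : (Matrix.toEuclideanLin.trans LinearMap.toContinuousLinearMap M) x
      = (EuclideanSpace.equiv m 𝕜).symm (M *ᵥ (WithLp.equiv 2 (k → 𝕜) x)) := rfl
  rw [happ]
  calc ‖(EuclideanSpace.equiv m 𝕜).symm (M *ᵥ (WithLp.equiv 2 (k → 𝕜) x))‖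
      ≤ ∑ i, ‖(M *ᵥ (WithLp.equiv 2 (k → 𝕜) x)) i‖ :=
        matrixExpDecayAux_euclid_norm_le_sum _
    _ ≤ ∑ i, ∑ j, ‖M i j‖ * ‖x‖ := by
        refine Finset.sum_le_sum fun i _ => ?_
        calc ‖(M *ᵥ (WithLp.equiv 2 (k → 𝕜) x)) i‖
            = ‖∑ j, M i j * (WithLp.equiv 2 (k → 𝕜) x) j‖ := rfl
          _ ≤ ∑ j, ‖M i j * (WithLp.equiv 2 (k → 𝕜) x) j‖ := norm_sum_le _ _
          _ ≤ ∑ j, ‖M i j‖ * ‖x‖ := by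
              refine Finset.sum_le_sum fun j _ => ?_
              rw [norm_mul]
              exact mul_le_mul_of_nonneg_left (matrixExpDecayAux_euclid_coord_le x j)
                (norm_nonneg _)
    _ = (∑ i, ∑ j, ‖M i j‖) * ‖x‖ := by rw [Finset.sum_mul]; simp [Finset.sum_mul]

theorem matrixExpDecayAux_norm_exp_le {n : ℕ} [NeZero n] (x : Matrix (Fin n) (Fin n) ℂ) :
    ‖NormedSpace.exp x‖ ≤ Real.exp ‖x‖ := by
  rw [NormedSpace.exp_eq_tsum ℂ]
  have hsum : Summable fun k : ℕ => ‖((k.factorial : ℂ)⁻¹ • x ^ k)‖ :=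
    NormedSpace.norm_expSeries_summable' x
  refine (norm_tsum_le_tsum_norm hsum).trans ?_
  have hsum2 : Summable fun k : ℕ => ((k.factorial : ℝ)⁻¹ • ‖x‖ ^ k) :=
    NormedSpace.expSeries_summable' (𝕂 := ℝ) ‖x‖
  have hb : ∀ k : ℕ, ‖((k.factorial : ℂ)⁻¹ • x ^ k)‖ ≤ ((k.factorial : ℝ)⁻¹ • ‖x‖ ^ k) := by
    intro k
    rw [norm_smul, smul_eq_mul, norm_inv]
    have h1 : ‖(k.factorial : ℂ)‖ = (k.factorial : ℝ) := by
      simp [Complex.norm_natCast]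
    rw [h1]
    have h2 : ‖x ^ k‖ ≤ ‖x‖ ^ k := by
      rcases Nat.eq_zero_or_pos k with hk | hk
      · subst hk; simp
      · exact norm_pow_le' x hk
    have h3 : (0:ℝ) ≤ (k.factorial : ℝ)⁻¹ := by positivity
    exact mul_le_mul_of_nonneg_left h2 h3
  refine (Summable.tsum_le_tsum hb hsum hsum2).trans ?_
  rw [Real.exp_eq_exp_ℝ, NormedSpace.exp_eq_tsum ℝ]

end Auxiliary

/-- **Exponential decay of the matrix exponential for a Hurwitz matrix.**
If every eigenvalue of the `n × n` real matrix `A` (viewed as a complex matrix)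
has strictly negative real part, then there are constants `K > 0` and `λ > 0`
with `‖exp (t • A)‖ ≤ K * exp (-λ * t)` for all `t ≥ 0`, where `‖·‖` is the
(ℓ²-)operator norm on matrices. -/
theorem matrix_exp_decay_of_spectrum_neg
    (n : ℕ) (A : Matrix (Fin n) (Fin n) ℝ)
    (hA : ∀ μ ∈ spectrum ℂ (A.map Complex.ofReal), μ.re < 0) :
    ∃ K > (0 : ℝ), ∃ lam > (0 : ℝ), ∀ t : ℝ, 0 ≤ t →
      ‖NormedSpace.exp (t • A)‖ ≤ K * Real.exp (-lam * t) := by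
  rcases Nat.eq_zero_or_pos n with hn | hn
  · subst hn
    refine ⟨1, one_pos, 1, one_pos, fun t ht => ?_⟩
    have h0 : NormedSpace.exp (t • A) = 0 := Subsingleton.elim _ _
    rw [h0, norm_zero, one_mul]
    positivity
  · haveI : NeZero n := ⟨hn.ne'⟩
    set B : Matrix (Fin n) (Fin n) ℂ := A.map Complex.ofReal with hB
    obtain ⟨μ₀, hμ₀mem, hμ₀max⟩ := (spectrum.isCompact (𝕜 := ℂ) B).exists_isMaxOn
      (spectrum.nonempty B) (Complex.continuous_re.continuousOn)
    set δ : ℝ := -μ₀.re with hδdef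
    have hδ : 0 < δ := by
      have := hA μ₀ hμ₀mem
      simp only [hδdef]
      linarith
    have hspecle : ∀ μ ∈ spectrum ℂ B, μ.re ≤ -δ := by
      intro μ hμ
      have := hμ₀max hμ
      simp only [hδdef, neg_neg]
      exact this
    set E : Matrix (Fin n) (Fin n) ℂ := NormedSpace.exp B with hE
    have hElt : ∀ ν ∈ spectrum ℂ E, ‖ν‖ < Real.exp (-(δ/2)) := by
      intro ν hν
      rw [hE, matrixExpDecayAux_spectrum_exp_eq] at hν
      obtain ⟨μ, hμ, rfl⟩ := hν
      rw [Complex.norm_exp]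
      exact Real.exp_lt_exp.mpr (by have := hspecle μ hμ; linarith)
    obtain ⟨C, hC0, hCb⟩ := matrixExpDecayAux_pow_norm_decay E (Real.exp_pos _) hElt
    have hn' : (0:ℝ) < n := Nat.cast_pos.mpr hn
    refine ⟨(n:ℝ) * n * (C * Real.exp ‖B‖ * Real.exp (δ/2)),
      mul_pos (mul_pos hn' hn')
        (mul_pos (mul_pos hC0 (Real.exp_pos _)) (Real.exp_pos _)),
      δ/2, by positivity, fun t ht => ?_⟩
    have hmapsmul : (t • A).map Complex.ofReal = t • B := by
      ext i j
      simp [hB, Matrix.map_apply, Matrix.smul_apply, Complex.ofReal_mul, Complex.real_smul]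
    have hcomm : (NormedSpace.exp (t • A)).map Complex.ofReal
        = NormedSpace.exp (t • B) := by
      have h1 : (NormedSpace.exp (t • A)).map Complex.ofReal
          = NormedSpace.exp ((t • A).map Complex.ofReal) := by
        letI : NormedAlgebra ℚ (Matrix (Fin n) (Fin n) ℝ) := NormedAlgebra.restrictScalars ℚ ℝ _
        letI : NormedAlgebra ℚ (Matrix (Fin n) (Fin n) ℂ) := NormedAlgebra.restrictScalars ℚ ℂ _
        exact NormedSpace.map_exp
          (F := Matrix (Fin n) (Fin n) ℝ →+* Matrix (Fin n) (Fin n) ℂ)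
          Complex.ofRealHom.mapMatrix
          (continuous_id.matrix_map Complex.continuous_ofReal) (t • A)
      rw [h1, hmapsmul]
    have htrans : ‖NormedSpace.exp (t • A)‖ ≤ (n:ℝ) * n * ‖NormedSpace.exp (t • B)‖ := by
      calc ‖NormedSpace.exp (t • A)‖
          ≤ ∑ i, ∑ j, ‖(NormedSpace.exp (t • A)) i j‖ :=
            matrixExpDecayAux_l2_opNorm_le_sum _
        _ ≤ ∑ _i : Fin n, ∑ _j : Fin n, ‖NormedSpace.exp (t • B)‖ := by
            refine Finset.sum_le_sum fun i _ => Finset.sum_le_sum fun j _ => ?_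
            have h5 : ‖(NormedSpace.exp (t • A)) i j‖
                = ‖((NormedSpace.exp (t • A)).map Complex.ofReal) i j‖ := by
              simp [Matrix.map_apply]
            rw [h5, hcomm]
            exact matrixExpDecayAux_entry_le_l2_opNorm _ i j
        _ = (n:ℝ) * n * ‖NormedSpace.exp (t • B)‖ := by
            simp [Finset.sum_const]
            ring
    set k : ℕ := ⌊t⌋₊ with hk
    have hkt : (k:ℝ) ≤ t := Nat.floor_le ht
    have htk1 : t < k + 1 := Nat.lt_floor_add_one t
    have hsplit : NormedSpace.exp (t • B) = E ^ k * NormedSpace.exp ((t - k) • B) := by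
      have h1 : t • B = (k:ℝ) • B + (t - k) • B := by
        rw [← add_smul]
        ring_nf
      rw [h1, Matrix.exp_add_of_commute _ _
        (((Commute.refl B).smul_left ((k:ℝ))).smul_right (t - k))]
      congr 1
      have h2 : (k:ℝ) • B = (k : ℕ) • B := Nat.cast_smul_eq_nsmul ℝ k B
      rw [h2, Matrix.exp_nsmul k B, hE]
    have hnorm1 : ‖NormedSpace.exp ((t - k) • B)‖ ≤ Real.exp ‖B‖ := by
      refine (matrixExpDecayAux_norm_exp_le _).trans (Real.exp_le_exp.mpr ?_)
      rw [norm_smul]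
      have h2 : ‖t - (k:ℝ)‖ ≤ 1 := by
        rw [Real.norm_eq_abs, abs_of_nonneg (by linarith)]
        linarith
      nlinarith [norm_nonneg B]
    have hrk : (Real.exp (-(δ/2))) ^ k ≤ Real.exp (δ/2) * Real.exp (-(δ/2) * t) := by
      rw [← Real.exp_nat_mul, ← Real.exp_add]
      refine Real.exp_le_exp.mpr ?_
      nlinarith
    have hEk : ‖NormedSpace.exp (t • B)‖ ≤ C * (Real.exp (-(δ/2))) ^ k * Real.exp ‖B‖ := by
      rw [hsplit]
      calc ‖E ^ k * NormedSpace.exp ((t - k) • B)‖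
          ≤ ‖E ^ k‖ * ‖NormedSpace.exp ((t - k) • B)‖ := norm_mul_le _ _
        _ ≤ (C * (Real.exp (-(δ/2))) ^ k) * Real.exp ‖B‖ := by
            have hek := hCb k
            have hnn : (0:ℝ) ≤ ‖NormedSpace.exp ((t - k) • B)‖ := norm_nonneg _
            nlinarith [pow_pos (Real.exp_pos (-(δ/2))) k, Real.exp_pos ‖B‖,
              norm_nonneg (E ^ k)]
    have hfinal : ‖NormedSpace.exp (t • B)‖
        ≤ (C * Real.exp ‖B‖ * Real.exp (δ/2)) * Real.exp (-(δ/2) * t) := by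
      have h6 : C * (Real.exp (-(δ/2))) ^ k * Real.exp ‖B‖
          ≤ C * (Real.exp (δ/2) * Real.exp (-(δ/2) * t)) * Real.exp ‖B‖ := by
        have h7 := mul_le_mul_of_nonneg_left hrk hC0.le
        exact mul_le_mul_of_nonneg_right h7 (Real.exp_pos ‖B‖).le
      calc ‖NormedSpace.exp (t • B)‖ ≤ C * (Real.exp (-(δ/2))) ^ k * Real.exp ‖B‖ := hEk
        _ ≤ C * (Real.exp (δ/2) * Real.exp (-(δ/2) * t)) * Real.exp ‖B‖ := h6
        _ = (C * Real.exp ‖B‖ * Real.exp (δ/2)) * Real.exp (-(δ/2) * t) := by ring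
    calc ‖NormedSpace.exp (t • A)‖ ≤ (n:ℝ) * n * ‖NormedSpace.exp (t • B)‖ := htrans
      _ ≤ (n:ℝ) * n * ((C * Real.exp ‖B‖ * Real.exp (δ/2)) * Real.exp (-(δ/2) * t)) :=
          mul_le_mul_of_nonneg_left hfinal (by positivity)
      _ = (n:ℝ) * n * (C * Real.exp ‖B‖ * Real.exp (δ/2)) * Real.exp (-(δ/2) * t) := by ring
end

section
/- Let U : [0,∞) → [0,∞) be strictly increasing and right-continuous with U(0) = 0 and U(s) → ∞ as s → ∞, define its generalized inverse E(t) := inf{s > 0 : U(s) > t}, and let dE denote the Lebesgue–Stieltjes measure of E (the Borel measure with dE((a,b]) = E(b) − E(a)). Define the left limit U⁻(s) := sup{U(r) : 0 ≤ r < s} for s > 0 and U⁻(0) := 0. Then for every Borel measurable function f : [0,∞) → [0,∞) and every t ≥ 0, ∫_{(0,t]} f(s) dE(s) = ∫_{(0,E(t)]} f(U⁻(s)) ds, where the right-hand side is the Lebesgue integral. -/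
open MeasureTheory Filter

/-- **Second change-of-variable formula (drift part).**
Let `U : [0,∞) → [0,∞)` be strictly increasing and right-continuous with `U 0 = 0`
and `U s → ∞`, let `E t = inf {s > 0 : U s > t}` be its generalized inverse, let
`dE` be the Lebesgue–Stieltjes measure of `E` (so `dE (a, b] = E b - E a`), and let
`U⁻ s = sup {U r : 0 ≤ r < s}` (with `U⁻ 0 = 0`) be the left-limit function of `U`.
Then for every Borel measurable `f : [0,∞) → [0,∞]` and every `t ≥ 0`,
`∫_{(0,t]} f s dE s = ∫_{(0, E t]} f (U⁻ s) ds`. -/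
theorem second_change_of_variable
    (U : ℝ → ℝ)
    (hU0 : U 0 = 0)
    (hUnonneg : ∀ s : ℝ, 0 ≤ s → 0 ≤ U s)
    (hUmono : StrictMonoOn U (Set.Ici 0))
    (hUrc : ∀ s ∈ Set.Ici (0 : ℝ), ContinuousWithinAt U (Set.Ici s) s)
    (hUtop : Tendsto U atTop atTop)
    (E : ℝ → ℝ)
    (hE : ∀ t : ℝ, 0 ≤ t → E t = sInf {s : ℝ | 0 < s ∧ t < U s})
    (dE : Measure ℝ)
    (hdE : ∀ a b : ℝ, 0 ≤ a → a ≤ b →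
      dE (Set.Ioc a b) = ENNReal.ofReal (E b - E a))
    (Um : ℝ → ℝ)
    (hUm : ∀ s : ℝ, 0 < s → Um s = sSup (U '' Set.Ico 0 s))
    (hUm0 : Um 0 = 0)
    (f : ℝ → ENNReal) (hf : Measurable f)
    (t : ℝ) (ht : 0 ≤ t) :
    ∫⁻ s in Set.Ioc 0 t, f s ∂dE = ∫⁻ s in Set.Ioc 0 (E t), f (Um s) := by
  have hUmonoLe : MonotoneOn U (Set.Ici 0) := hUmono.monotoneOn
  -- `g` is a globally defined left-limit function agreeing with `Um` on `(0, ∞)`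
  set g : ℝ → ℝ := fun s => sSup (U '' Set.Ico 0 s) with hg
  have hgUm : ∀ s : ℝ, 0 < s → g s = Um s := fun s hs => (hUm s hs).symm
  have bddU : ∀ s : ℝ, BddAbove (U '' Set.Ico 0 s) := by
    intro s
    refine ⟨U (max s 0), ?_⟩
    rintro _ ⟨r, ⟨hr0, hrs⟩, rfl⟩
    exact hUmonoLe hr0 (Set.mem_Ici.2 (le_max_right s 0)) (hrs.le.trans (le_max_left s 0))
  have hgpos : ∀ s : ℝ, 0 < s → 0 < g s := by
    intro s hs
    have h1 : U (s / 2) ≤ g s :=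
      le_csSup (bddU s) ⟨s / 2, ⟨(half_pos hs).le, half_lt_self hs⟩, rfl⟩
    have h2 : 0 < U (s / 2) := by
      have := hUmono (Set.self_mem_Ici) (Set.mem_Ici.2 (half_pos hs).le) (half_pos hs)
      rwa [hU0] at this
    linarith
  have hgmono : Monotone g := by
    intro s s' hss'
    rcases le_or_gt s 0 with hs | hs
    · have hempty : Set.Ico (0 : ℝ) s = ∅ := Set.Ico_eq_empty (by intro h; linarith)
      have h1 : g s = 0 := by rw [hg]; simp [hempty, Real.sSup_empty]
      rcases le_or_gt s' 0 with hs' | hs'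
      · have hempty' : Set.Ico (0 : ℝ) s' = ∅ := Set.Ico_eq_empty (by intro h; linarith)
        have h2 : g s' = 0 := by rw [hg]; simp [hempty', Real.sSup_empty]
        rw [h1, h2]
      · rw [h1]; exact (hgpos s' hs').le
    · refine csSup_le_csSup (bddU s') ?_ (Set.image_mono (Set.Ico_subset_Ico_right hss'))
      exact ⟨U 0, ⟨0, ⟨le_rfl, hs⟩, rfl⟩⟩
  have hgmeas : Measurable g := hgmono.measurable
  -- properties of the generalized inverse E
  have Sne : ∀ x : ℝ, {s : ℝ | 0 < s ∧ x < U s}.Nonempty := by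
    intro x
    obtain ⟨s, hs1, hs2⟩ :=
      ((hUtop.eventually (eventually_gt_atTop x)).and (eventually_gt_atTop 0)).exists
    exact ⟨s, hs2, hs1⟩
  have Sbdd : ∀ x : ℝ, BddBelow {s : ℝ | 0 < s ∧ x < U s} := fun x => ⟨0, fun s hs => hs.1.le⟩
  have hEnn : ∀ x : ℝ, 0 ≤ x → 0 ≤ E x := by
    intro x hx
    rw [hE x hx]
    exact le_csInf (Sne x) fun s hs => hs.1.le
  have hEmono : ∀ x y : ℝ, 0 ≤ x → x ≤ y → E x ≤ E y := by
    intro x y hx hxy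
    rw [hE x hx, hE y (hx.trans hxy)]
    exact csInf_le_csInf (Sbdd x) (Sne y) fun s hs => ⟨hs.1, lt_of_le_of_lt hxy hs.2⟩
  -- the key duality between g and E
  have key : ∀ s x : ℝ, 0 < s → 0 ≤ x → (g s ≤ x ↔ s ≤ E x) := by
    intro s x hs hx
    rw [hE x hx]
    constructor
    · intro h
      refine le_csInf (Sne x) fun u hu => ?_
      by_contra hus
      push_neg at hus
      have h1 : U u ≤ g s := le_csSup (bddU s) ⟨u, ⟨hu.1.le, hus⟩, rfl⟩
      exact absurd (hu.2.trans_le (h1.trans h)) (lt_irrefl x)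
    · intro h
      refine csSup_le ⟨U 0, ⟨0, ⟨le_rfl, hs⟩, rfl⟩⟩ ?_
      rintro _ ⟨r, ⟨hr0, hrs⟩, rfl⟩
      by_contra hrx
      push_neg at hrx
      have hr0' : 0 < r := by
        rcases hr0.lt_or_eq with h' | h'
        · exact h'
        · exfalso; rw [← h', hU0] at hrx; exact absurd hrx (not_lt.2 hx)
      have h2 : sInf {s : ℝ | 0 < s ∧ x < U s} ≤ r := csInf_le (Sbdd x) ⟨hr0', hrx⟩
      linarith
  -- the measure identity
  have hmap : dE.restrict (Set.Ioc 0 t) =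
      Measure.map g (volume.restrict (Set.Ioc 0 (E t))) := by
    have hfin : ∀ ⦃a b : ℝ⦄, a < b → dE.restrict (Set.Ioc 0 t) (Set.Ioc a b) ≠ ⊤ := by
      intro a b _
      refine ne_top_of_le_ne_top ?_ (measure_mono (Set.subset_univ _))
      rw [Measure.restrict_apply_univ, hdE 0 t le_rfl ht]
      exact ENNReal.ofReal_ne_top
    refine Measure.ext_of_Ioc' _ _ hfin ?_
    intro a b hab
    rw [Measure.restrict_apply measurableSet_Ioc,
      Measure.map_apply hgmeas measurableSet_Ioc,
      Measure.restrict_apply (hgmeas measurableSet_Ioc)]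
    rcases le_or_gt b 0 with hb | hb
    · have h1 : Set.Ioc a b ∩ Set.Ioc 0 t = ∅ := by
        ext x
        simp only [Set.mem_inter_iff, Set.mem_Ioc, Set.mem_empty_iff_false, iff_false]
        rintro ⟨⟨_, hxb⟩, hx0, _⟩
        linarith
      have h2 : g ⁻¹' Set.Ioc a b ∩ Set.Ioc 0 (E t) = ∅ := by
        ext s
        simp only [Set.mem_inter_iff, Set.mem_preimage, Set.mem_Ioc, Set.mem_empty_iff_false,
          iff_false]
        rintro ⟨⟨_, hgb⟩, hs0, _⟩
        have := hgpos s hs0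
        linarith
      rw [h1, h2]; simp
    rcases le_or_gt t a with hta | hta
    · have h1 : Set.Ioc a b ∩ Set.Ioc 0 t = ∅ := by
        ext x
        simp only [Set.mem_inter_iff, Set.mem_Ioc, Set.mem_empty_iff_false, iff_false]
        rintro ⟨⟨hax, _⟩, _, hxt⟩
        linarith
      have h2 : g ⁻¹' Set.Ioc a b ∩ Set.Ioc 0 (E t) = ∅ := by
        ext s
        simp only [Set.mem_inter_iff, Set.mem_preimage, Set.mem_Ioc, Set.mem_empty_iff_false,
          iff_false]
        rintro ⟨⟨hag, _⟩, hs0, hsEt⟩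
        have hgt : g s ≤ t := (key s t hs0 ht).2 hsEt
        linarith
      rw [h1, h2]; simp
    · -- main case : a < t and 0 < b
      set a' := max a 0 with ha'
      set b' := min b t with hb'
      have ha'0 : 0 ≤ a' := le_max_right a 0
      have hb'0 : 0 ≤ b' := le_min hb.le ht
      have ha'b' : a' ≤ b' := max_le (le_min hab.le hta.le) (le_min hb.le ht)
      have h1 : Set.Ioc a b ∩ Set.Ioc 0 t = Set.Ioc a' b' := Set.Ioc_inter_Ioc
      have h2 : g ⁻¹' Set.Ioc a b ∩ Set.Ioc 0 (E t) = Set.Ioc (E a') (E b') := by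
        ext s
        simp only [Set.mem_inter_iff, Set.mem_preimage, Set.mem_Ioc]
        constructor
        · rintro ⟨⟨hag, hgb⟩, hs0, hsEt⟩
          have hgt : g s ≤ t := (key s t hs0 ht).2 hsEt
          have hsb' : s ≤ E b' := (key s b' hs0 hb'0).1 (le_min hgb hgt)
          have hga' : a' < g s := max_lt hag (hgpos s hs0)
          have hEa' : E a' < s := by
            by_contra hcon
            push_neg at hcon
            exact absurd ((key s a' hs0 ha'0).2 hcon) (not_le.2 hga')
          exact ⟨hEa', hsb'⟩
        · rintro ⟨hEa', hsb'⟩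
          have hs0 : 0 < s := lt_of_le_of_lt (hEnn a' ha'0) hEa'
          have hsEt : s ≤ E t := hsb'.trans (hEmono b' t hb'0 (min_le_right b t))
          have hgb' : g s ≤ b' := (key s b' hs0 hb'0).2 hsb'
          have hga' : a' < g s := by
            by_contra hcon
            push_neg at hcon
            exact absurd ((key s a' hs0 ha'0).1 hcon) (not_le.2 hEa')
          exact ⟨⟨lt_of_le_of_lt (le_max_left a 0) hga', hgb'.trans (min_le_left b t)⟩,
            hs0, hsEt⟩
      rw [h1, h2, hdE a' b' ha'0 ha'b', Real.volume_Ioc]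
  -- conclude
  calc ∫⁻ s in Set.Ioc 0 t, f s ∂dE
      = ∫⁻ x, f x ∂(Measure.map g (volume.restrict (Set.Ioc 0 (E t)))) := by rw [← hmap]
    _ = ∫⁻ s in Set.Ioc 0 (E t), f (g s) := lintegral_map hf hgmeas
    _ = ∫⁻ s in Set.Ioc 0 (E t), f (Um s) := by
        refine setLIntegral_congr_fun measurableSet_Ioc (fun s hs => ?_)
        rw [hgUm s hs.1]
end

section
/- Let E : [0,∞) → [0,∞) be nondecreasing and continuous with E(0) = 0, with Lebesgue–Stieltjes measure dE (dE((a,b]) = E(b) − E(a)). Let A be an n×n real matrix, x₀ ∈ ℝⁿ, and F : [0,∞) → ℝⁿ a Borel function integrable with respect to dE on (0,t] for every t. If X : [0,∞) → ℝⁿ is continuous and satisfies X(t) = x₀ + ∫_{(0,t]} (A·X(s) + F(s)) dE(s) for all t ≥ 0, then X(t) = exp(E(t)·A)·x₀ + ∫_{(0,t]} exp((E(t) − E(s))·A)·F(s) dE(s) for all t ≥ 0. -/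
open MeasureTheory Set Filter Function

set_option maxHeartbeats 1000000

section StieltjesAux

variable {E : StieltjesFunction ℝ}

lemma stieltjes_noAtoms (hE : Continuous E) : NullSingletonClass E.measure := by
  constructor
  intro x
  rw [StieltjesFunction.measure_singleton]
  have : Function.leftLim E x = E x := by
    apply leftLim_eq_of_tendsto (α := ℝ)
    exact (hE.tendsto x).mono_left nhdsWithin_le_nhds
  rw [this, sub_self, ENNReal.ofReal_zero]

lemma stieltjes_null_level (hE : Continuous E) (r a b : ℝ) :
    E.measure ({x | E x = r} ∩ Set.Icc a b) = 0 := by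
  set S := {x | E x = r} ∩ Set.Icc a b with hS
  rcases eq_empty_or_nonempty S with h | h
  · simp [h]
  have hSc : IsClosed S := (isClosed_eq hE continuous_const).inter isClosed_Icc
  have hbdd : BddBelow S := ⟨a, fun x hx => hx.2.1⟩
  have hbdd' : BddAbove S := ⟨b, fun x hx => hx.2.2⟩
  have hp : sInf S ∈ S := hSc.csInf_mem h hbdd
  have hq : sSup S ∈ S := hSc.csSup_mem h hbdd'
  have hsub : S ⊆ Set.Icc (sInf S) (sSup S) := fun x hx => ⟨csInf_le hbdd hx, le_csSup hbdd' hx⟩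
  refine measure_mono_null hsub ?_
  rw [StieltjesFunction.measure_Icc]
  have : Function.leftLim E (sInf S) = E (sInf S) := by
    apply leftLim_eq_of_tendsto (α := ℝ)
    exact (hE.tendsto _).mono_left nhdsWithin_le_nhds
  rw [this, hp.1, hq.1, sub_self, ENNReal.ofReal_zero]

lemma stieltjes_exists_inv (hE : Continuous E) {a b c : ℝ} (hab : a ≤ b)
    (h1 : E a ≤ c) (h2 : c ≤ E b) :
    ∃ u ∈ Set.Icc a b, E u = c ∧ ∀ x ∈ Set.Icc a b, (x ≤ u ↔ E x ≤ c) := by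
  set T := {x ∈ Set.Icc a b | E x ≤ c} with hT
  have hTne : T.Nonempty := ⟨a, ⟨le_refl a, hab⟩, h1⟩
  have hTbdd : BddAbove T := ⟨b, fun x hx => hx.1.2⟩
  have hTc : IsClosed T := by
    have : T = Set.Icc a b ∩ E ⁻¹' (Set.Iic c) := by
      ext x; simp [hT, and_comm]
    rw [this]
    exact isClosed_Icc.inter (IsClosed.preimage hE isClosed_Iic)
  set u := sSup T with hu
  have huT : u ∈ T := hTc.csSup_mem hTne hTbdd
  have huc : E u = c := by
    rcases lt_or_eq_of_le huT.2 with hlt | heq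
    · exfalso
      have hub : u < b := by
        rcases lt_or_eq_of_le huT.1.2 with h | h
        · exact h
        · exact absurd (h ▸ hlt) (not_lt.2 h2)
      have h1' : ∀ᶠ x in nhds u, E x < c := (hE.tendsto u).eventually_lt_const hlt
      have h2' : ∀ᶠ x in nhds u, x < b := eventually_lt_nhds hub
      have h3' : ∀ᶠ x in nhds u, E x < c ∧ x < b := h1'.and h2'
      have := (h3'.filter_mono (nhdsWithin_le_nhds (s := Set.Ioi u))).and self_mem_nhdsWithin
      obtain ⟨x, ⟨hxc, hxb⟩, hxu⟩ := this.exists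
      have hxT : x ∈ T := ⟨⟨huT.1.1.trans (le_of_lt hxu), le_of_lt hxb⟩, le_of_lt hxc⟩
      exact absurd (le_csSup hTbdd hxT) (not_le.2 hxu)
    · exact heq
  refine ⟨u, huT.1, huc, fun x hx => ⟨fun hxu => huc ▸ E.mono hxu, fun hEx => le_csSup hTbdd ⟨hx, hEx⟩⟩⟩

lemma le_clamp_iff {lo hi x d : ℝ} (hlo : lo ≤ x) (hhi : x ≤ hi)
    (hne : x ≠ min (max d lo) hi) : x ≤ min (max d lo) hi ↔ x ≤ d := by
  rcases le_total d lo with h | h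
  · rw [max_eq_right h, min_eq_left (hlo.trans hhi)]
    constructor
    · intro h'; exact absurd (le_antisymm h' hlo) (by simpa [max_eq_right h, min_eq_left (hlo.trans hhi)] using hne)
    · intro h'; linarith
  · rcases le_total d hi with h' | h'
    · rw [max_eq_left h, min_eq_left h']
    · rw [max_eq_left h, min_eq_right h']
      constructor <;> intro <;> linarith

lemma clamp_lt_iff {lo hi x c : ℝ} (hlo : lo ≤ x) (hhi : x ≤ hi)
    (hne : x ≠ min (max c lo) hi) : min (max c lo) hi < x ↔ c < x := by
  rcases le_total c lo with h | h
  · rw [max_eq_right h, min_eq_left (hlo.trans hhi)] at *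
    constructor
    · intro h'; linarith
    · intro _; exact lt_of_le_of_ne hlo (Ne.symm hne)
  · rcases le_total c hi with h' | h'
    · rw [max_eq_left h, min_eq_left h']
    · rw [max_eq_left h, min_eq_right h'] at *
      constructor <;> intro <;> linarith


lemma stieltjes_map_restrict {E : StieltjesFunction ℝ} (hE : Continuous E) {a b : ℝ} (hab : a ≤ b) :
    (E.measure.restrict (Set.Ioc a b)).map E = volume.restrict (Set.Ioc (E a) (E b)) := by
  have hEab : E a ≤ E b := E.mono hab
  refine Measure.ext_of_Ioc' _ _ (fun c d _ => ?_) (fun c d hcd => ?_)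
  · rw [Measure.map_apply hE.measurable measurableSet_Ioc]
    refine ne_of_lt (lt_of_le_of_lt (measure_mono (subset_univ _)) ?_)
    rw [Measure.restrict_apply_univ, StieltjesFunction.measure_Ioc]
    exact ENNReal.ofReal_lt_top
  rw [Measure.map_apply hE.measurable measurableSet_Ioc,
    Measure.restrict_apply (hE.measurable measurableSet_Ioc),
    Measure.restrict_apply measurableSet_Ioc, Set.Ioc_inter_Ioc, Real.volume_Ioc]
  set c' := min (max c (E a)) (E b) with hc'
  set d' := min (max d (E a)) (E b) with hd'
  have hc'1 : E a ≤ c' := le_min (le_max_right _ _) hEab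
  have hc'2 : c' ≤ E b := min_le_right _ _
  have hd'1 : E a ≤ d' := le_min (le_max_right _ _) hEab
  have hd'2 : d' ≤ E b := min_le_right _ _
  obtain ⟨u, huI, huc, hu⟩ := stieltjes_exists_inv hE hab hc'1 hc'2
  obtain ⟨v, hvI, hvc, hv⟩ := stieltjes_exists_inv hE hab hd'1 hd'2
  have hc'd' : c' ≤ d' := min_le_min (max_le_max hcd.le le_rfl) le_rfl
  have huv : u ≤ v := (hv u huI).2 (huc ▸ hc'd')
  -- the two sets agree off the level sets of c' and d'
  set P := E ⁻¹' Set.Ioc c d ∩ Set.Ioc a b with hP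
  set Q := Set.Ioc u v with hQ
  have hQsub : Q ⊆ Set.Ioc a b := Set.Ioc_subset_Ioc huI.1 hvI.2
  set N := ({x | E x = c'} ∩ Set.Icc a b) ∪ ({x | E x = d'} ∩ Set.Icc a b) with hN
  have hNnull : E.measure N = 0 :=
    measure_union_null (stieltjes_null_level hE c' a b) (stieltjes_null_level hE d' a b)
  have key : ∀ x ∈ Set.Ioc a b, x ∉ N → (x ∈ P ↔ x ∈ Q) := by
    intro x hx hxN
    have hxI : x ∈ Set.Icc a b := ⟨hx.1.le, hx.2⟩
    have hne1 : E x ≠ c' := fun h => hxN (Or.inl ⟨h, hxI⟩)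
    have hne2 : E x ≠ d' := fun h => hxN (Or.inr ⟨h, hxI⟩)
    have hEx1 : E a ≤ E x := E.mono hxI.1
    have hEx2 : E x ≤ E b := E.mono hxI.2
    have m1 : u < x ↔ c' < E x := by
      rw [← not_le, ← not_le, hu x hxI]
    have m2 : x ≤ v ↔ E x ≤ d' := by rw [hv x hxI]
    constructor
    · rintro ⟨⟨h1, h2⟩, -⟩
      refine ⟨m1.2 ?_, m2.2 ?_⟩
      · exact (clamp_lt_iff hEx1 hEx2 hne1).2 h1
      · exact (le_clamp_iff hEx1 hEx2 hne2).2 h2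
    · rintro ⟨h1, h2⟩
      refine ⟨⟨?_, ?_⟩, hx⟩
      · exact (clamp_lt_iff hEx1 hEx2 hne1).1 (m1.1 h1)
      · exact (le_clamp_iff hEx1 hEx2 hne2).1 (m2.1 h2)
  have hPQ : P =ᵐ[E.measure] Q := by
    rw [Filter.eventuallyEq_set]
    have : ∀ᵐ x ∂E.measure, x ∉ N := by
      rw [ae_iff]; simpa using hNnull
    filter_upwards [this] with x hxN
    constructor
    · intro hxP; exact ((key x hxP.2 hxN).1 hxP)
    · intro hxQ; exact ((key x (hQsub hxQ) hxN).2 hxQ)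
  rw [measure_congr hPQ, hQ, StieltjesFunction.measure_Ioc, huc, hvc]
  -- final arithmetic: ofReal (d' - c') = ofReal (min d (E b) - max c (E a))
  rcases le_or_gt (max c (E a)) (min d (E b)) with h | h
  · have h1 : c' = max c (E a) := min_eq_left (h.trans (min_le_right _ _))
    have h2 : max d (E a) = d := max_eq_left (le_trans (le_max_right _ _) (le_trans h (min_le_left _ _)))
    rw [h1, hd', h2, min_comm]
  · have h2 : min d (E b) - max c (E a) ≤ 0 := by linarith
    rw [ENNReal.ofReal_eq_zero.2 h2, ENNReal.ofReal_eq_zero]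
    rcases le_total c (E a) with hc | hc
    · rw [max_eq_right hc] at h
      have hd : d < E a := by
        rcases le_total d (E b) with h3 | h3
        · rwa [min_eq_left h3] at h
        · rw [min_eq_right h3] at h; linarith
      have hda : d' = E a := by rw [hd', max_eq_right hd.le, min_eq_left hEab]
      linarith [hc'1]
    · rw [max_eq_left hc] at h
      have hEb : E b < c := by
        rcases le_total d (E b) with h3 | h3
        · rw [min_eq_left h3] at h; linarith
        · rwa [min_eq_right h3] at h
      have hcb : c' = E b := by rw [hc', min_eq_right (le_trans hEb.le (le_max_left _ _))]
      linarith [hd'2]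


lemma stieltjes_setIntegral_comp {V : Type*} [NormedAddCommGroup V] [NormedSpace ℝ V]
    {E : StieltjesFunction ℝ} (hE : Continuous E) {a b : ℝ} (hab : a ≤ b)
    {g : ℝ → V} (hg : Continuous g) :
    ∫ s in Set.Ioc a b, g (E s) ∂E.measure = ∫ u in Set.Ioc (E a) (E b), g u := by
  rw [← stieltjes_map_restrict hE hab,
    integral_map hE.measurable.aemeasurable hg.aestronglyMeasurable]

end StieltjesAux

section MatrixPart

variable {n : ℕ}
attribute [local instance] Matrix.linftyOpNormedRing Matrix.linftyOpNormedAlgebra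
noncomputable local instance matrixContinuousENorm :
    ContinuousENorm (Matrix (Fin n) (Fin n) ℝ) := SeminormedAddGroup.toContinuousENorm
local instance matrixPseudoMetrizable :
    TopologicalSpace.PseudoMetrizableSpace (Matrix (Fin n) (Fin n) ℝ) :=
  inferInstanceAs (TopologicalSpace.PseudoMetrizableSpace (Fin n → Fin n → ℝ))

noncomputable def mulVecCLM (n : ℕ) (w : Fin n → ℝ) :
    Matrix (Fin n) (Fin n) ℝ →L[ℝ] (Fin n → ℝ) :=
  LinearMap.toContinuousLinearMap
    { toFun := fun M => M.mulVec w
      map_add' := fun M N => Matrix.add_mulVec M N w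
      map_smul' := fun c M => Matrix.smul_mulVec c M w }

@[simp] lemma mulVecCLM_apply (w : Fin n → ℝ) (M : Matrix (Fin n) (Fin n) ℝ) :
    mulVecCLM n w M = M.mulVec w := rfl

noncomputable def mulVecCLM' (n : ℕ) (A : Matrix (Fin n) (Fin n) ℝ) :
    (Fin n → ℝ) →L[ℝ] (Fin n → ℝ) :=
  LinearMap.toContinuousLinearMap A.mulVecLin

@[simp] lemma mulVecCLM'_apply (A : Matrix (Fin n) (Fin n) ℝ) (v : Fin n → ℝ) :
    mulVecCLM' n A v = A.mulVec v := rfl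

lemma cont_exp_smul (A : Matrix (Fin n) (Fin n) ℝ) :
    Continuous fun u : ℝ => NormedSpace.exp (u • A) :=
  NormedSpace.exp_continuous.comp (continuous_id.smul continuous_const)


lemma integral_exp_piece (A : Matrix (Fin n) (Fin n) ℝ) {p q : ℝ} (hpq : p ≤ q) :
    ∫ u in Set.Ioc p q, (NormedSpace.exp ((u - p) • A) * A) =
      NormedSpace.exp ((q - p) • A) - 1 := by
  have hderiv : ∀ u ∈ Set.uIcc p q, HasDerivAt (fun w : ℝ => NormedSpace.exp ((w - p) • A))
      (NormedSpace.exp ((u - p) • A) * A) u := fun u _ =>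
    HasDerivAt.comp_sub_const u p (hasDerivAt_exp_smul_const (𝕂 := ℝ) A (u - p))
  have hcont : ContinuousOn (fun u : ℝ => NormedSpace.exp ((u - p) • A) * A)
      (Set.uIcc p q) :=
    (((cont_exp_smul A).comp (continuous_id.sub continuous_const)).mul
      continuous_const).continuousOn
  have := intervalIntegral.integral_eq_sub_of_hasDerivAt hderiv hcont.intervalIntegrable
  rw [intervalIntegral.integral_of_le hpq] at this
  rw [this, sub_self, zero_smul, NormedSpace.exp_zero]

/-- measurability of `x ↦ (φ (e x)).mulVec (w x)` -/
lemma measurable_matrix_mulVec {α : Type*} [MeasurableSpace α]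
    {φ : ℝ → Matrix (Fin n) (Fin n) ℝ} (hφ : Continuous φ) {e : α → ℝ} (he : Measurable e)
    {w : α → Fin n → ℝ} (hw : Measurable w) :
    Measurable fun x => (φ (e x)).mulVec (w x) := by
  rw [measurable_pi_iff]
  intro i
  simp only [Matrix.mulVec, dotProduct]
  apply Finset.measurable_sum
  intro j _
  have h2 : Continuous fun M : Matrix (Fin n) (Fin n) ℝ => M i j :=
    (continuous_apply j).comp (continuous_apply i)
  exact ((h2.comp hφ).measurable.comp he).mul ((measurable_pi_apply j).comp hw)


variable {E : StieltjesFunction ℝ} {A : Matrix (Fin n) (Fin n) ℝ} {F : ℝ → Fin n → ℝ}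


/-- bound on the exponential over a compact time window -/
lemma exp_bound (hE : Continuous E) (A : Matrix (Fin n) (Fin n) ℝ) (T : ℝ) :
    ∃ C : ℝ, 0 ≤ C ∧ ∀ a ∈ Set.Icc (0:ℝ) T, ∀ b ∈ Set.Icc (0:ℝ) T,
      ‖NormedSpace.exp ((E a - E b) • A)‖ ≤ C := by
  have hcont : Continuous fun p : ℝ × ℝ => NormedSpace.exp ((E p.1 - E p.2) • A) :=
    NormedSpace.exp_continuous.comp
      (((hE.comp continuous_fst).sub (hE.comp continuous_snd)).smul continuous_const)
  obtain ⟨C, hC⟩ := (isCompact_Icc.prod isCompact_Icc).exists_bound_of_continuousOn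
    (f := fun p : ℝ × ℝ => NormedSpace.exp ((E p.1 - E p.2) • A)) hcont.continuousOn
  refine ⟨max C 0, le_max_right _ _, fun a ha b hb => ?_⟩
  exact (hC (a, b) ⟨ha, hb⟩).trans (le_max_left _ _)


lemma integrableOn_phi (hE : Continuous E) {a b : ℝ} (hab : a ≤ b)
    {φ : ℝ → Matrix (Fin n) (Fin n) ℝ} (hφ : Continuous φ) :
    IntegrableOn (fun s => φ (E s)) (Set.Ioc a b) E.measure := by
  have hfin : E.measure (Set.Ioc a b) < ⊤ := by
    rw [StieltjesFunction.measure_Ioc]; exact ENNReal.ofReal_lt_top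
  obtain ⟨C, hC⟩ := isCompact_Icc.exists_bound_of_continuousOn
    (f := φ) (s := Set.Icc (E a) (E b)) hφ.continuousOn
  apply Integrable.mono' (g := fun _ : ℝ => C) (integrableOn_const hfin.ne)
  · exact (hφ.comp hE).aestronglyMeasurable
  · filter_upwards [ae_restrict_mem measurableSet_Ioc] with s hs
    exact hC (E s) ⟨E.mono hs.1.le, E.mono hs.2⟩


lemma integrableOn_phi_mulVec (hE : Continuous E) (hFmeas : Measurable F)
    (hFint : ∀ t : ℝ, IntegrableOn F (Set.Ioc 0 t) E.measure)
    {T : ℝ} (hT : 0 ≤ T) {φ : ℝ → Matrix (Fin n) (Fin n) ℝ} (hφ : Continuous φ) :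
    IntegrableOn (fun s => (φ (E s)).mulVec (F s)) (Set.Ioc 0 T) E.measure := by
  obtain ⟨C, hC⟩ := isCompact_Icc.exists_bound_of_continuousOn
    (f := fun u : ℝ => φ u) (s := Set.Icc (E 0) (E T)) hφ.continuousOn
  apply Integrable.mono' (g := fun s => C * ‖F s‖) (((hFint T).norm.const_mul C))
  · exact (measurable_matrix_mulVec hφ hE.measurable hFmeas).aestronglyMeasurable
  · filter_upwards [ae_restrict_mem measurableSet_Ioc] with s hs
    have h1 : ‖(φ (E s)).mulVec (F s)‖ ≤ ‖φ (E s)‖ * ‖F s‖ := Matrix.linfty_opNorm_mulVec _ _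
    have h2 : ‖φ (E s)‖ ≤ C := hC (E s) ⟨E.mono hs.1.le, E.mono hs.2⟩
    exact h1.trans (mul_le_mul_of_nonneg_right h2 (norm_nonneg _))


lemma stieltjes_moment {E : StieltjesFunction ℝ} (hE : Continuous E) (hE0 : E 0 = 0) (k : ℕ)
    {t : ℝ} (ht : 0 ≤ t) :
    ∫ s in Set.Ioc 0 t, (E s) ^ k ∂E.measure = (E t) ^ (k + 1) / (k + 1) := by
  have hEt : (0:ℝ) ≤ E t := hE0 ▸ E.mono ht
  rw [stieltjes_setIntegral_comp hE ht (g := fun u => u ^ k) (continuous_pow k), hE0,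
    ← intervalIntegral.integral_of_le hEt, integral_pow]
  simp


lemma stieltjes_gronwall {E : StieltjesFunction ℝ} (hE : Continuous E) (hE0 : E 0 = 0)
    (A : Matrix (Fin n) (Fin n) ℝ) {T : ℝ} (hT : 0 ≤ T) {D : ℝ → Fin n → ℝ}
    (hmeas : AEStronglyMeasurable D (E.measure.restrict (Set.Ioc 0 T)))
    (M : ℝ) (hM : ∀ t ∈ Set.Icc 0 T, ‖D t‖ ≤ M)
    (hrec : ∀ t ∈ Set.Icc 0 T, D t = ∫ s in Set.Ioc 0 t, A.mulVec (D s) ∂E.measure) :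
    ∀ t ∈ Set.Icc 0 T, D t = 0 := by
  have hEnn : ∀ s : ℝ, 0 ≤ s → (0:ℝ) ≤ E s := fun s hs => hE0 ▸ E.mono hs
  have key : ∀ k : ℕ, ∀ t ∈ Set.Icc 0 T, ‖D t‖ ≤ M * (‖A‖ * E t) ^ k / (Nat.factorial k) := by
    intro k
    induction k with
    | zero => intro t ht; simpa using hM t ht
    | succ k ih =>
      intro t ht
      have htt : (0:ℝ) ≤ t := ht.1
      have hfin : E.measure (Set.Ioc 0 t) < ⊤ := by
        rw [StieltjesFunction.measure_Ioc]; exact ENNReal.ofReal_lt_top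
      rw [hrec t ht]
      calc ‖∫ s in Set.Ioc 0 t, A.mulVec (D s) ∂E.measure‖
          ≤ ∫ s in Set.Ioc 0 t, ‖A.mulVec (D s)‖ ∂E.measure :=
            norm_integral_le_integral_norm _
        _ ≤ ∫ s in Set.Ioc 0 t, ‖A‖ * (M * (‖A‖ * E s) ^ k / (Nat.factorial k)) ∂E.measure := by
            apply integral_mono_of_nonneg
            · exact Filter.Eventually.of_forall fun s => norm_nonneg _
            · apply Integrable.mono'
                (g := fun _ : ℝ => ‖A‖ * (M * (‖A‖ * E t) ^ k / (Nat.factorial k)))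
              · exact integrableOn_const hfin.ne
              · exact (continuous_const.mul ((continuous_const.mul
                  (((continuous_const.mul hE).pow k))).div_const _)).measurable.aestronglyMeasurable
              · filter_upwards [ae_restrict_mem measurableSet_Ioc] with s hs
                have h0s : (0:ℝ) ≤ E s := hEnn s hs.1.le
                have hst : E s ≤ E t := E.mono hs.2
                have hM0 : 0 ≤ M := le_trans (norm_nonneg (D 0)) (hM 0 ⟨le_refl 0, hT⟩)
                have hfk : (0:ℝ) ≤ (Nat.factorial k : ℝ) := Nat.cast_nonneg _
                rw [Real.norm_eq_abs, abs_of_nonneg (by positivity)]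
                gcongr
            · filter_upwards [ae_restrict_mem measurableSet_Ioc] with s hs
              have h1 : ‖A.mulVec (D s)‖ ≤ ‖A‖ * ‖D s‖ := Matrix.linfty_opNorm_mulVec A (D s)
              have h2 : ‖D s‖ ≤ M * (‖A‖ * E s) ^ k / (Nat.factorial k) :=
                ih s ⟨hs.1.le, hs.2.trans ht.2⟩
              exact h1.trans (by nlinarith [norm_nonneg A, norm_nonneg (D s)])
        _ = M * (‖A‖ * E t) ^ (k+1) / (Nat.factorial (k+1)) := by
            have hrw : ∀ s : ℝ, ‖A‖ * (M * (‖A‖ * E s) ^ k / (Nat.factorial k)) =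
                (‖A‖ ^ (k+1) * M / (Nat.factorial k)) * (E s) ^ k := by
              intro s; rw [mul_pow]; ring
            simp_rw [hrw]
            rw [integral_const_mul _ _, stieltjes_moment hE hE0 k htt]
            have hk : ((Nat.factorial k : ℝ)) ≠ 0 := Nat.cast_ne_zero.2 k.factorial_ne_zero
            have hk1 : ((k:ℝ) + 1) ≠ 0 := by positivity
            rw [mul_pow]
            push_cast [Nat.factorial_succ]
            field_simp
  intro t ht
  have hconv : Filter.Tendsto (fun k : ℕ => M * (‖A‖ * E t) ^ k / (Nat.factorial k))
      Filter.atTop (nhds 0) := by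
    have := FloorSemiring.tendsto_pow_div_factorial_atTop (K := ℝ) (‖A‖ * E t)
    have h2 := this.const_mul M
    simpa [mul_div_assoc] using h2
  have : ‖D t‖ ≤ 0 := ge_of_tendsto' hconv (fun k => key k t ht)
  simpa using norm_le_zero_iff.1 this



/-- The candidate solution. -/
noncomputable def Zfun (E : StieltjesFunction ℝ) (A : Matrix (Fin n) (Fin n) ℝ)
    (x₀ : Fin n → ℝ) (F : ℝ → Fin n → ℝ) : ℝ → Fin n → ℝ := fun t =>
  (NormedSpace.exp (E t • A)).mulVec x₀ +
    ∫ s in Set.Ioc 0 t, (NormedSpace.exp ((E t - E s) • A)).mulVec (F s) ∂E.measure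

lemma Z_cont (hE : Continuous E) (hE0 : E 0 = 0) (x₀ : Fin n → ℝ) (hFmeas : Measurable F)
    (hFint : ∀ t : ℝ, IntegrableOn F (Set.Ioc 0 t) E.measure)
    {T : ℝ} (hT : 0 ≤ T) :
    ContinuousOn (Zfun E A x₀ F) (Set.Icc 0 T) := by
  haveI := stieltjes_noAtoms hE
  obtain ⟨C, hC0, hC⟩ := exp_bound hE A T
  set g : ℝ → ℝ → (Fin n → ℝ) := fun t s =>
    (NormedSpace.exp ((E t - E s) • A)).mulVec (F s) with hg
  have hgm : ∀ t : ℝ, Measurable (g t) := fun t =>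
    measurable_matrix_mulVec ((cont_exp_smul A).comp (continuous_const.sub continuous_id))
      hE.measurable hFmeas
  have heq : ∀ t ∈ Set.Icc (0:ℝ) T,
      ∫ s in Set.Ioc 0 t, g t s ∂E.measure
        = ∫ s in Set.Ioc 0 T, Set.indicator (Set.Ioc 0 t) (g t) s ∂E.measure := by
    intro t ht
    rw [integral_indicator measurableSet_Ioc, Measure.restrict_restrict measurableSet_Ioc]
    congr 1
    rw [Set.Ioc_inter_Ioc]
    simp [ht.2]
  have hmain : ContinuousOn
      (fun t => ∫ s in Set.Ioc 0 T, Set.indicator (Set.Ioc 0 t) (g t) s ∂E.measure)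
      (Set.Icc 0 T) := by
    intro t ht
    unfold ContinuousWithinAt
    apply tendsto_integral_filter_of_dominated_convergence (bound := fun s => C * ‖F s‖)
    · exact Filter.Eventually.of_forall fun t' =>
        ((hgm t').indicator measurableSet_Ioc).aestronglyMeasurable
    · filter_upwards [self_mem_nhdsWithin] with t' ht'
      filter_upwards [ae_restrict_mem measurableSet_Ioc] with s hs
      refine (norm_indicator_le_norm_self _ _).trans ?_
      refine (Matrix.linfty_opNorm_mulVec _ _).trans ?_
      exact mul_le_mul_of_nonneg_right
        (hC t' ht' s ⟨hs.1.le, hs.2⟩) (norm_nonneg _)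
    · exact (hFint T).norm.const_mul C
    · have hne : ∀ᵐ s ∂E.measure.restrict (Set.Ioc 0 T), s ≠ t := by
        refine ae_restrict_of_ae ?_
        rw [ae_iff]
        simpa using measure_singleton (μ := E.measure) t
      filter_upwards [hne, ae_restrict_mem measurableSet_Ioc] with s hsne hs
      rcases lt_or_gt_of_ne hsne with hlt | hgt
      · -- s < t : eventually s ∈ Ioc 0 t'
        have hev : ∀ᶠ t' in nhdsWithin t (Set.Icc 0 T), s ∈ Set.Ioc 0 t' := by
          have : ∀ᶠ t' in nhds t, s < t' := eventually_gt_nhds hlt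
          exact (this.filter_mono nhdsWithin_le_nhds).mono fun t' h => ⟨hs.1, h.le⟩
        have hcongr : (fun t' => Set.indicator (Set.Ioc 0 t') (g t') s)
            =ᶠ[nhdsWithin t (Set.Icc 0 T)] fun t' => g t' s :=
          hev.mono fun t' h => Set.indicator_of_mem h _
        have hcont : Filter.Tendsto (fun t' => g t' s) (nhdsWithin t (Set.Icc 0 T))
            (nhds (g t s)) := by
          have : Continuous fun t' => g t' s :=
            (mulVecCLM n (F s)).continuous.comp
              ((cont_exp_smul A).comp ((hE.sub continuous_const)))
          exact (this.tendsto t).mono_left nhdsWithin_le_nhds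
        rw [show Set.indicator (Set.Ioc 0 t) (g t) s = g t s from
          Set.indicator_of_mem (show s ∈ Set.Ioc 0 t from ⟨hs.1, hlt.le⟩) _]
        exact hcont.congr' hcongr.symm
      · -- s > t : eventually s ∉ Ioc 0 t'
        have hev : ∀ᶠ t' in nhdsWithin t (Set.Icc 0 T), s ∉ Set.Ioc 0 t' := by
          have : ∀ᶠ t' in nhds t, t' < s := eventually_lt_nhds hgt
          exact (this.filter_mono nhdsWithin_le_nhds).mono fun t' h hmem => absurd hmem.2 (not_le.2 h)
        have hcongr : (fun t' => Set.indicator (Set.Ioc 0 t') (g t') s)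
            =ᶠ[nhdsWithin t (Set.Icc 0 T)] fun _ => (0 : Fin n → ℝ) :=
          hev.mono fun t' h => Set.indicator_of_notMem h _
        rw [show Set.indicator (Set.Ioc 0 t) (g t) s = 0 from
          Set.indicator_of_notMem (fun hmem => absurd hmem.2 (not_le.2 hgt)) _]
        exact tendsto_const_nhds.congr' hcongr.symm
  have hterm1 : Continuous fun t => (NormedSpace.exp (E t • A)).mulVec x₀ :=
    (mulVecCLM n x₀).continuous.comp ((cont_exp_smul A).comp hE)
  have : ContinuousOn
      (fun t => (NormedSpace.exp (E t • A)).mulVec x₀ +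
        ∫ s in Set.Ioc 0 T, Set.indicator (Set.Ioc 0 t) (g t) s ∂E.measure) (Set.Icc 0 T) :=
    hterm1.continuousOn.add hmain
  exact this.congr fun t ht => by rw [Zfun, heq t ht]



lemma Z_eq (hE : Continuous E) (hE0 : E 0 = 0) (x₀ : Fin n → ℝ) (hFmeas : Measurable F)
    (hFint : ∀ t : ℝ, IntegrableOn F (Set.Ioc 0 t) E.measure)
    {t : ℝ} (ht : 0 ≤ t) :
    Zfun E A x₀ F t = x₀ +
      ∫ s in Set.Ioc 0 t, (A.mulVec (Zfun E A x₀ F s) + F s) ∂E.measure := by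
  haveI := stieltjes_noAtoms hE
  have hfin : E.measure (Set.Ioc 0 t) < ⊤ := by
    rw [StieltjesFunction.measure_Ioc]; exact ENNReal.ofReal_lt_top
  haveI hfinI : IsFiniteMeasure (E.measure.restrict (Set.Ioc 0 t)) :=
    ⟨by rw [Measure.restrict_apply_univ]; exact hfin⟩
  set Z := Zfun E A x₀ F with hZ
  set T1 : ℝ → Fin n → ℝ := fun s => (NormedSpace.exp (E s • A)).mulVec x₀ with hT1
  set W : ℝ → Fin n → ℝ := fun s =>
    ∫ r in Set.Ioc 0 s, (NormedSpace.exp ((E s - E r) • A)).mulVec (F r) ∂E.measure with hW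
  have hZdef : ∀ s, Z s = T1 s + W s := fun s => by
    simp only [hZ, Zfun, hT1, hW]
  -- integrability of the pieces
  have hcommute : ∀ u : ℝ, A * NormedSpace.exp (u • A) = NormedSpace.exp (u • A) * A :=
    fun u => ((Commute.refl A).smul_right u).exp_right
  have hAT1int : IntegrableOn (fun s => A.mulVec (T1 s)) (Set.Ioc 0 t) E.measure := by
    have := integrableOn_phi_mulVec (F := fun _ => x₀) hE measurable_const
      (fun T => integrableOn_const (by
        rw [StieltjesFunction.measure_Ioc]; exact ENNReal.ofReal_ne_top)) ht
      (φ := fun u => A * NormedSpace.exp (u • A))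
      (continuous_const.mul (cont_exp_smul A))
    refine this.congr_fun (fun s _ => ?_) measurableSet_Ioc
    simp only [hT1]
    rw [Matrix.mulVec_mulVec]
  have hZcont : ContinuousOn Z (Set.Icc 0 t) := Z_cont hE hE0 x₀ hFmeas hFint ht
  obtain ⟨MZ, hMZ⟩ := isCompact_Icc.exists_bound_of_continuousOn hZcont
  have hZmeas : AEStronglyMeasurable Z (E.measure.restrict (Set.Ioc 0 t)) :=
    (hZcont.mono Set.Ioc_subset_Icc_self).aestronglyMeasurable measurableSet_Ioc
  have hAZint : IntegrableOn (fun s => A.mulVec (Z s)) (Set.Ioc 0 t) E.measure := by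
    apply Integrable.mono' (g := fun _ : ℝ => ‖A‖ * MZ)
      (integrableOn_const hfin.ne)
    · exact (mulVecCLM' n A).continuous.comp_aestronglyMeasurable hZmeas
    · filter_upwards [ae_restrict_mem measurableSet_Ioc] with s hs
      exact (Matrix.linfty_opNorm_mulVec _ _).trans
        (mul_le_mul_of_nonneg_left (hMZ s ⟨hs.1.le, hs.2⟩) (norm_nonneg _))
  have hAWint : IntegrableOn (fun s => A.mulVec (W s)) (Set.Ioc 0 t) E.measure := by
    have : (fun s => A.mulVec (W s)) = fun s => A.mulVec (Z s) - A.mulVec (T1 s) := by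
      funext s; rw [hZdef s, Matrix.mulVec_add]; abel
    rw [this]; exact hAZint.sub hAT1int
  -- step 1 : additivity
  rw [integral_add (hAZint) (hFint t)]
  have hsplit : ∫ s in Set.Ioc 0 t, A.mulVec (Z s) ∂E.measure =
      (∫ s in Set.Ioc 0 t, A.mulVec (T1 s) ∂E.measure) +
      ∫ s in Set.Ioc 0 t, A.mulVec (W s) ∂E.measure := by
    rw [← integral_add hAT1int hAWint]
    exact setIntegral_congr_fun measurableSet_Ioc fun s _ => by
      rw [hZdef s, Matrix.mulVec_add]
  rw [hsplit]
  -- Term 1 : ∫ A (T1 s) = exp(E t • A) x₀ - x₀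
  have hterm1 : ∫ s in Set.Ioc 0 t, A.mulVec (T1 s) ∂E.measure =
      (NormedSpace.exp (E t • A)).mulVec x₀ - x₀ := by
    have h1 : ∀ s : ℝ, A.mulVec (T1 s) =
        ((fun u => NormedSpace.exp (u • A) * A) (E s)).mulVec x₀ := by
      intro s
      simp only [hT1]
      rw [Matrix.mulVec_mulVec, hcommute]
    simp_rw [h1]
    have hint : IntegrableOn (fun s => NormedSpace.exp ((E s) • A) * A) (Set.Ioc 0 t)
        E.measure := integrableOn_phi hE ht ((cont_exp_smul A).mul continuous_const)
    have h2 : ∀ s : ℝ, ((fun u => NormedSpace.exp (u • A) * A) (E s)).mulVec x₀ =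
        mulVecCLM n x₀ (NormedSpace.exp ((E s) • A) * A) := fun s =>
      (mulVecCLM_apply x₀ _).symm
    simp_rw [h2]
    refine (ContinuousLinearMap.integral_comp_comm (mulVecCLM n x₀) hint).trans ?_
    show (∫ x in Set.Ioc 0 t, NormedSpace.exp (E x • A) * A ∂E.measure).mulVec x₀ = _
    rw [show (∫ x in Set.Ioc 0 t, NormedSpace.exp (E x • A) * A ∂E.measure) =
        ∫ u in Set.Ioc (E 0) (E t), NormedSpace.exp (u • A) * A from
      stieltjes_setIntegral_comp hE ht ((cont_exp_smul A).mul continuous_const), hE0]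
    have h3 : ∫ u in Set.Ioc (0:ℝ) (E t), NormedSpace.exp (u • A) * A =
        NormedSpace.exp (E t • A) - 1 := by
      have h4 := integral_exp_piece A (p := 0) (q := E t) (hE0 ▸ E.mono ht)
      simp only [sub_zero] at h4
      exact h4
    rw [h3, Matrix.sub_mulVec, Matrix.one_mulVec]
  rw [hterm1]
  -- Term 2 : Fubini
  set ψ : ℝ → ℝ → (Fin n → ℝ) := fun s r =>
    (A * NormedSpace.exp ((E s - E r) • A)).mulVec (F r) with hψ
  have hterm2 : ∫ s in Set.Ioc 0 t, A.mulVec (W s) ∂E.measure =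
      (∫ r in Set.Ioc 0 t, (NormedSpace.exp ((E t - E r) • A)).mulVec (F r) ∂E.measure) -
        ∫ r in Set.Ioc 0 t, F r ∂E.measure := by
    obtain ⟨C, hC0, hC⟩ := exp_bound hE A t
    have hψm : Measurable (fun p : ℝ × ℝ => ψ p.1 p.2) :=
      measurable_matrix_mulVec (φ := fun u => A * NormedSpace.exp (u • A))
        (continuous_const.mul (cont_exp_smul A))
        ((hE.measurable.comp measurable_fst).sub (hE.measurable.comp measurable_snd))
        (hFmeas.comp measurable_snd)
    have hinner_int : ∀ s : ℝ, 0 ≤ s → IntegrableOn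
        (fun r => (NormedSpace.exp ((E s - E r) • A)).mulVec (F r)) (Set.Ioc 0 s)
        E.measure := fun s hs =>
      integrableOn_phi_mulVec hE hFmeas hFint hs
        (φ := fun u => NormedSpace.exp ((E s - u) • A))
        ((cont_exp_smul A).comp (continuous_const.sub continuous_id))
    have hstepAB : ∀ s ∈ Set.Ioc (0:ℝ) t, A.mulVec (W s) =
        ∫ r in Set.Ioc 0 t, Set.indicator (Set.Iic s) (ψ s) r ∂E.measure := by
      intro s hs
      have hA : A.mulVec (W s) = ∫ r in Set.Ioc 0 s, ψ s r ∂E.measure := by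
        simp only [hW]
        rw [← mulVecCLM'_apply A, ← ContinuousLinearMap.integral_comp_comm _
          (hinner_int s hs.1.le)]
        refine setIntegral_congr_fun measurableSet_Ioc (fun r _ => ?_)
        rw [mulVecCLM'_apply, Matrix.mulVec_mulVec]
      have hseteq : Set.Iic s ∩ Set.Ioc 0 t = Set.Ioc 0 s := by
        ext r
        constructor
        · rintro ⟨h1, h2, h3⟩; exact ⟨h2, h1⟩
        · rintro ⟨h1, h2⟩; exact ⟨h2, h1, h2.trans hs.2⟩
      rw [hA, integral_indicator measurableSet_Iic,
        Measure.restrict_restrict measurableSet_Iic, hseteq]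
    have huncurry : (Function.uncurry fun s r => Set.indicator (Set.Iic s) (ψ s) r) =
        Set.indicator {p : ℝ × ℝ | p.2 ≤ p.1} (fun p => ψ p.1 p.2) := by
      funext p
      by_cases h : p.2 ≤ p.1 <;>
        simp [Function.uncurry, Set.indicator_apply, h]
    have hint : Integrable (Function.uncurry fun s r => Set.indicator (Set.Iic s) (ψ s) r)
        ((E.measure.restrict (Set.Ioc 0 t)).prod (E.measure.restrict (Set.Ioc 0 t))) := by
      apply Integrable.mono' (g := fun p : ℝ × ℝ => (‖A‖ * C) * ‖F p.2‖)
      · have h1 : Integrable (fun _ : ℝ => ‖A‖ * C)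
            (E.measure.restrict (Set.Ioc 0 t)) := integrable_const _
        have h2 : Integrable (fun r => ‖F r‖) (E.measure.restrict (Set.Ioc 0 t)) :=
          (hFint t).norm
        simpa using h1.mul_prod h2
      · rw [huncurry]
        exact ((hψm.indicator (measurableSet_le measurable_snd measurable_fst))).aestronglyMeasurable
      · rw [Measure.prod_restrict]
        filter_upwards [ae_restrict_mem (measurableSet_Ioc.prod measurableSet_Ioc)] with p hp
        rw [huncurry]
        refine (norm_indicator_le_norm_self _ _).trans ?_
        refine (Matrix.linfty_opNorm_mulVec _ _).trans ?_
        refine mul_le_mul_of_nonneg_right ?_ (norm_nonneg _)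
        refine (norm_mul_le _ _).trans ?_
        exact mul_le_mul_of_nonneg_left
          (hC p.1 ⟨hp.1.1.le, hp.1.2⟩ p.2 ⟨hp.2.1.le, hp.2.2⟩) (norm_nonneg A)
    have hstepD : ∀ r ∈ Set.Ioc (0:ℝ) t,
        (∫ s in Set.Ioc 0 t, Set.indicator (Set.Iic s) (ψ s) r ∂E.measure) =
          (NormedSpace.exp ((E t - E r) • A)).mulVec (F r) - F r := by
      intro r hr
      have hφc : Continuous fun u : ℝ => A * NormedSpace.exp ((u - E r) • A) :=
        continuous_const.mul ((cont_exp_smul A).comp (continuous_id.sub continuous_const))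
      have h1 : (fun s => Set.indicator (Set.Iic s) (ψ s) r) =
          fun s => Set.indicator (Set.Ici r) (fun s' => ψ s' r) s := by
        funext s
        by_cases h : r ≤ s <;> simp [Set.indicator_apply, h]
      rw [h1, integral_indicator measurableSet_Ici,
        Measure.restrict_restrict measurableSet_Ici]
      have h2 : Set.Ici r ∩ Set.Ioc 0 t = Set.Icc r t := by
        ext x
        simp only [Set.mem_inter_iff, Set.mem_Ici, Set.mem_Ioc, Set.mem_Icc]
        constructor
        · rintro ⟨h1', h2', h3'⟩; exact ⟨h1', h3'⟩
        · rintro ⟨h1', h2'⟩; exact ⟨h1', lt_of_lt_of_le hr.1 h1', h2'⟩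
      rw [h2, ← Measure.restrict_congr_set Ioc_ae_eq_Icc]
      have h3 : ∀ s : ℝ, ψ s r =
          mulVecCLM n (F r) ((fun u => A * NormedSpace.exp ((u - E r) • A)) (E s)) :=
        fun s => by rw [mulVecCLM_apply]
      simp_rw [h3]
      refine (ContinuousLinearMap.integral_comp_comm (mulVecCLM n (F r))
        (integrableOn_phi hE hr.2 hφc)).trans ?_
      show (∫ x in Set.Ioc r t, A * NormedSpace.exp ((E x - E r) • A) ∂E.measure).mulVec (F r) = _
      rw [show (∫ x in Set.Ioc r t, A * NormedSpace.exp ((E x - E r) • A) ∂E.measure) =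
          ∫ u in Set.Ioc (E r) (E t), A * NormedSpace.exp ((u - E r) • A) from
        stieltjes_setIntegral_comp hE hr.2 hφc]
      have h4 : (∫ u in Set.Ioc (E r) (E t), A * NormedSpace.exp ((u - E r) • A)) =
          NormedSpace.exp ((E t - E r) • A) - 1 := by
        rw [setIntegral_congr_fun measurableSet_Ioc
          (fun u _ => hcommute (u - E r))]
        exact integral_exp_piece A (E.mono hr.2)
      rw [h4, Matrix.sub_mulVec, Matrix.one_mulVec]
    calc ∫ s in Set.Ioc 0 t, A.mulVec (W s) ∂E.measure
        = ∫ s in Set.Ioc 0 t, (∫ r in Set.Ioc 0 t,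
            Set.indicator (Set.Iic s) (ψ s) r ∂E.measure) ∂E.measure :=
          setIntegral_congr_fun measurableSet_Ioc hstepAB
      _ = ∫ r in Set.Ioc 0 t, (∫ s in Set.Ioc 0 t,
            Set.indicator (Set.Iic s) (ψ s) r ∂E.measure) ∂E.measure :=
          integral_integral_swap hint
      _ = ∫ r in Set.Ioc 0 t,
            ((NormedSpace.exp ((E t - E r) • A)).mulVec (F r) - F r) ∂E.measure :=
          setIntegral_congr_fun measurableSet_Ioc hstepD
      _ = (∫ r in Set.Ioc 0 t, (NormedSpace.exp ((E t - E r) • A)).mulVec (F r) ∂E.measure) -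
            ∫ r in Set.Ioc 0 t, F r ∂E.measure := by
          apply integral_sub
          · exact integrableOn_phi_mulVec hE hFmeas hFint ht
              (φ := fun u => NormedSpace.exp ((E t - u) • A))
              ((cont_exp_smul A).comp (continuous_const.sub continuous_id))
          · exact hFint t
  rw [hterm2]
  rw [hZ]
  show Zfun E A x₀ F t = _
  rw [Zfun]
  abel


theorem timeChanged_variation_of_constants_aux
    (n : ℕ) (E : StieltjesFunction ℝ) (hEcont : Continuous E) (hE0 : E 0 = 0)
    (A : Matrix (Fin n) (Fin n) ℝ) (x₀ : Fin n → ℝ)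
    (F : ℝ → Fin n → ℝ) (hFmeas : Measurable F)
    (hFint : ∀ t : ℝ, IntegrableOn F (Set.Ioc 0 t) E.measure)
    (X : ℝ → Fin n → ℝ) (hXcont : ContinuousOn X (Set.Ici 0))
    (hX : ∀ t : ℝ, 0 ≤ t →
      X t = x₀ + ∫ s in Set.Ioc 0 t, (A.mulVec (X s) + F s) ∂E.measure) :
    ∀ t : ℝ, 0 ≤ t → X t = Zfun E A x₀ F t := by
  intro t₀ ht₀
  set Z := Zfun E A x₀ F with hZ
  have hZcont : ContinuousOn Z (Set.Icc 0 t₀) := Z_cont hEcont hE0 x₀ hFmeas hFint ht₀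
  have hXcont' : ContinuousOn X (Set.Icc 0 t₀) :=
    hXcont.mono (fun x hx => hx.1)
  obtain ⟨MZ, hMZ⟩ := isCompact_Icc.exists_bound_of_continuousOn hZcont
  obtain ⟨MX, hMX⟩ := isCompact_Icc.exists_bound_of_continuousOn hXcont'
  set D := fun s => X s - Z s with hD
  have hDmeas : AEStronglyMeasurable D (E.measure.restrict (Set.Ioc 0 t₀)) :=
    ((hXcont'.mono Set.Ioc_subset_Icc_self).aestronglyMeasurable measurableSet_Ioc).sub
      ((hZcont.mono Set.Ioc_subset_Icc_self).aestronglyMeasurable measurableSet_Ioc)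
  have hAint : ∀ (Y : ℝ → Fin n → ℝ) (MY : ℝ), (∀ x ∈ Set.Icc 0 t₀, ‖Y x‖ ≤ MY) →
      ContinuousOn Y (Set.Icc 0 t₀) → ∀ τ ∈ Set.Icc (0:ℝ) t₀,
      IntegrableOn (fun s => A.mulVec (Y s)) (Set.Ioc 0 τ) E.measure := by
    intro Y MY hMY hYcont τ hτ
    have hfin : E.measure (Set.Ioc 0 τ) < ⊤ := by
      rw [StieltjesFunction.measure_Ioc]; exact ENNReal.ofReal_lt_top
    apply Integrable.mono' (g := fun _ : ℝ => ‖A‖ * MY)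
      (integrableOn_const hfin.ne)
    · exact (mulVecCLM' n A).continuous.comp_aestronglyMeasurable
        (((hYcont.mono (fun x hx => ⟨hx.1.le, hx.2.trans hτ.2⟩))).aestronglyMeasurable
          measurableSet_Ioc)
    · filter_upwards [ae_restrict_mem measurableSet_Ioc] with s hs
      exact (Matrix.linfty_opNorm_mulVec _ _).trans
        (mul_le_mul_of_nonneg_left (hMY s ⟨hs.1.le, hs.2.trans hτ.2⟩) (norm_nonneg _))
  have hrec : ∀ τ ∈ Set.Icc (0:ℝ) t₀,
      D τ = ∫ s in Set.Ioc 0 τ, A.mulVec (D s) ∂E.measure := by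
    intro τ hτ
    have hXi := hAint X MX hMX hXcont' τ hτ
    have hZi := hAint Z MZ hMZ hZcont τ hτ
    have e1 := hX τ hτ.1
    have e2 := Z_eq (A := A) hEcont hE0 x₀ hFmeas hFint hτ.1
    rw [hD]
    simp only
    simp only [hZ] at hZi ⊢
    rw [e1, e2]
    have h3 : ∫ s in Set.Ioc 0 τ, A.mulVec (X s - Zfun E A x₀ F s) ∂E.measure =
        (∫ s in Set.Ioc 0 τ, A.mulVec (X s) ∂E.measure) -
          ∫ s in Set.Ioc 0 τ, A.mulVec (Zfun E A x₀ F s) ∂E.measure := by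
      rw [← integral_sub hXi hZi]
      exact setIntegral_congr_fun measurableSet_Ioc fun s _ => Matrix.mulVec_sub A _ _
    rw [h3, integral_add hXi (hFint τ), integral_add hZi (hFint τ)]
    abel
  have hDzero := stieltjes_gronwall hEcont hE0 A ht₀ hDmeas (MX + MZ)
    (fun τ hτ => (norm_sub_le _ _).trans (add_le_add (hMX τ hτ) (hMZ τ hτ))) hrec
  have := hDzero t₀ ⟨ht₀, le_refl t₀⟩
  have : X t₀ - Z t₀ = 0 := this
  linear_combination (norm := module) this

end MatrixPart

/-- **Variation-of-constants formula for a time-changed linear system.**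
Let `E` be a nondecreasing continuous function with `E 0 = 0` (a `StieltjesFunction`
with Lebesgue–Stieltjes measure `E.measure`), `A` an `n × n` real matrix, and
`F` a Borel function integrable with respect to `dE` on `(0, t]` for every `t`.
If `X` is continuous on `[0,∞)` and satisfies
`X t = x₀ + ∫_{(0,t]} (A ⬝ X s + F s) dE s` for all `t ≥ 0`, then
`X t = exp (E t • A) ⬝ x₀ + ∫_{(0,t]} exp ((E t - E s) • A) ⬝ F s dE s` for all `t ≥ 0`. -/
theorem timeChanged_variation_of_constants
    (n : ℕ) (E : StieltjesFunction ℝ) (hEcont : Continuous E) (hE0 : E 0 = 0)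
    (A : Matrix (Fin n) (Fin n) ℝ) (x₀ : Fin n → ℝ)
    (F : ℝ → Fin n → ℝ) (hFmeas : Measurable F)
    (hFint : ∀ t : ℝ, IntegrableOn F (Set.Ioc 0 t) E.measure)
    (X : ℝ → Fin n → ℝ) (hXcont : ContinuousOn X (Set.Ici 0))
    (hX : ∀ t : ℝ, 0 ≤ t →
      X t = x₀ + ∫ s in Set.Ioc 0 t, (A.mulVec (X s) + F s) ∂E.measure) :
    ∀ t : ℝ, 0 ≤ t →
      X t = (NormedSpace.exp (E t • A)).mulVec x₀ +
        ∫ s in Set.Ioc 0 t, (NormedSpace.exp ((E t - E s) • A)).mulVec (F s)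
          ∂E.measure :=
  timeChanged_variation_of_constants_aux n E hEcont hE0 A x₀ F hFmeas hFint X hXcont hX
end

section
/- Let E : [0,∞) → [0,∞) be nondecreasing and continuous with E(0) = 0, with Lebesgue–Stieltjes measure dE (dE((a,b]) = E(b) − E(a)). Let x₀ ∈ ℝⁿ, let P : [0,∞) → ℝⁿ be Borel and locally Lebesgue-integrable, let Φ : [0,∞) → ℝⁿ be Borel and locally dE-integrable, and define X(t) := x₀ + ∫₀^t P(s) ds + ∫_{(0,t]} Φ(s) dE(s). Let F : ℝ × ℝ × ℝⁿ → ℝ be continuously differentiable. Then for every t ≥ 0, F(t, E(t), X(t)) − F(0, 0, x₀) = ∫₀^t [∂_{t₁}F(s, E(s), X(s)) + ∇_x F(s, E(s), X(s))·P(s)] ds + ∫_{(0,t]} [∂_{t₂}F(s, E(s), X(s)) + ∇_x F(s, E(s), X(s))·Φ(s)] dE(s). -/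
open MeasureTheory

open Set

variable {V : Type*} [NormedAddCommGroup V] [NormedSpace ℝ V] [FiniteDimensional ℝ V]

set_option maxHeartbeats 1000000 in
lemma core_chain_rule (F : V → ℝ) (hF : ContDiff ℝ 1 F)
    (g : ℝ → V) (hg : Integrable g volume) (c : V) (T : ℝ) (hT : 0 ≤ T) :
    F (c + ∫ s in Ioc 0 T, g s) - F c
      = ∫ s in Ioc 0 T, fderiv ℝ F (c + ∫ u in Ioc 0 s, g u) (g s) := by
  set D : V → (V →L[ℝ] ℝ) := fun x => fderiv ℝ F x with hD
  have hDcont : Continuous D := hF.continuous_fderiv one_ne_zero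
  set h : ℝ → V := fun s => c + ∫ u in (0:ℝ)..s, g u with hh
  have hIoc : ∀ s : ℝ, 0 ≤ s → c + ∫ u in Ioc 0 s, g u = h s := fun s hs => by
    rw [hh]; simp [intervalIntegral.integral_of_le hs]
  have hhcont : Continuous h := continuous_const.add (hg.continuous_primitive 0)
  rw [hIoc T hT, setIntegral_congr_fun measurableSet_Ioc
    (g := fun s => D (h s) (g s)) (fun s hs => by rw [hIoc s hs.1.le])]
  -- Main statement: F (h T) - F c = ∫ s in Ioc 0 T, D (h s) (g s)
  have hK : IsCompact (h '' Icc 0 T) := isCompact_Icc.image hhcont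
  have hK₁ : IsCompact (Metric.cthickening 1 (h '' Icc 0 T)) := hK.cthickening
  set K₁ := Metric.cthickening 1 (h '' Icc 0 T) with hK₁def
  have hKsub : h '' Icc 0 T ⊆ K₁ := Metric.self_subset_cthickening _
  obtain ⟨M, hM⟩ := hK₁.exists_bound_of_continuousOn hDcont.continuousOn
  have h0K : h 0 ∈ h '' Icc 0 T := ⟨0, ⟨le_rfl, hT⟩, rfl⟩
  have hM0 : 0 ≤ M := le_trans (norm_nonneg _) (hM (h 0) (hKsub h0K))
  have hUCD := (Metric.uniformContinuousOn_iff.mp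
    (hK₁.uniformContinuousOn_of_continuous hDcont.continuousOn))
  have hUCF := (Metric.uniformContinuousOn_iff.mp
    (hK₁.uniformContinuousOn_of_continuous hF.continuous.continuousOn))
  set I := ∫ s in Ioc (0:ℝ) T, ‖g s‖ with hIdef
  have hI0 : 0 ≤ I := setIntegral_nonneg measurableSet_Ioc (fun s _ => norm_nonneg _)
  have hgm : AEStronglyMeasurable g volume := hg.aestronglyMeasurable
  have hφm : AEStronglyMeasurable (fun s => D (h s) (g s)) volume :=
    isBoundedBilinearMap_apply.continuous.comp_aestronglyMeasurable
      (((hDcont.comp hhcont).aestronglyMeasurable).prodMk hgm)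
  have hφint : IntegrableOn (fun s => D (h s) (g s)) (Ioc 0 T) volume := by
    refine Integrable.mono' ((hg.norm.const_mul M).restrict) hφm.restrict ?_
    refine (ae_restrict_iff' measurableSet_Ioc).2 (ae_of_all _ fun s hs => ?_)
    calc ‖D (h s) (g s)‖ ≤ ‖D (h s)‖ * ‖g s‖ := (D (h s)).le_opNorm _
      _ ≤ M * ‖g s‖ := by
          have : h s ∈ K₁ := hKsub ⟨s, ⟨hs.1.le, hs.2⟩, rfl⟩
          exact mul_le_mul_of_nonneg_right (hM _ this) (norm_nonneg _)
  set d := F (h T) - F c - ∫ s in Ioc 0 T, D (h s) (g s) with hd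
  have key : ∀ ε : ℝ, 0 < ε → |d| ≤ ε := by
    intro ε hε
    obtain ⟨δ₁, hδ₁, hδ₁'⟩ := hUCD (ε / (2 * (I + 1))) (by positivity)
    obtain ⟨δ₂, hδ₂, hδ₂'⟩ := hUCF (ε / 4) (by positivity)
    set r := min (min δ₁ δ₂ / 2) (min 1 (ε / (4 * (M + 1)))) with hrdef
    have hr : 0 < r := by positivity
    have hr1 : r ≤ 1 := (min_le_right _ _).trans (min_le_left _ _)
    have hrr : r ≤ min δ₁ δ₂ / 2 := min_le_left _ _
    have hrδ₁ : r < δ₁ := by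
      have := min_le_left δ₁ δ₂; linarith
    have hrδ₂ : r < δ₂ := by
      have := min_le_right δ₁ δ₂; linarith
    have hrM : r ≤ ε / (4 * (M + 1)) := (min_le_right _ _).trans (min_le_right _ _)
    -- continuous approximation
    obtain ⟨gc, gcsupp, gcapprox, gccont, gcint⟩ :=
      hg.exists_hasCompactSupport_integral_sub_le hr
    set hc : ℝ → V := fun s => c + ∫ u in (0:ℝ)..s, gc u with hhc
    have hccont : Continuous hc := continuous_const.add (gcint.continuous_primitive 0)
    -- distance between h and hc
    have hdist : ∀ s : ℝ, 0 ≤ s → dist (hc s) (h s) ≤ r := by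
      intro s hs
      rw [dist_eq_norm]
      have : hc s - h s = ∫ u in (0:ℝ)..s, (gc u - g u) := by
        rw [hhc, hh]
        rw [intervalIntegral.integral_sub (gcint.intervalIntegrable) (hg.intervalIntegrable)]
        exact add_sub_add_left_eq_sub _ _ _
      rw [this]
      calc ‖∫ u in (0:ℝ)..s, (gc u - g u)‖
          ≤ ∫ u in (0:ℝ)..s, ‖gc u - g u‖ :=
            intervalIntegral.norm_integral_le_integral_norm hs
        _ = ∫ u in Ioc 0 s, ‖gc u - g u‖ := intervalIntegral.integral_of_le hs
        _ ≤ ∫ u, ‖gc u - g u‖ :=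
            setIntegral_le_integral (gcint.sub hg).norm (ae_of_all _ fun u => norm_nonneg _)
        _ = ∫ u, ‖g u - gc u‖ := by simp_rw [norm_sub_rev]
        _ ≤ r := gcapprox
    have hcmem : ∀ s ∈ Icc (0:ℝ) T, hc s ∈ K₁ := by
      intro s hs
      exact Metric.mem_cthickening_of_dist_le (hc s) (h s) 1 _ ⟨s, hs, rfl⟩
        ((hdist s hs.1).trans hr1)
    have hmem : ∀ s ∈ Icc (0:ℝ) T, h s ∈ K₁ := fun s hs => hKsub ⟨s, hs, rfl⟩
    -- FTC for the approximation
    have hcderiv : ∀ s : ℝ, HasDerivAt hc (gc s) s := by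
      intro s
      exact (intervalIntegral.integral_hasDerivAt_right gcint.intervalIntegrable
        gccont.stronglyMeasurable.stronglyMeasurableAtFilter
        gccont.continuousAt).const_add c
    have hFC : ∀ s : ℝ, HasDerivAt (fun u => F (hc u)) (D (hc s) (gc s)) s := fun s =>
      ((hF.differentiable one_ne_zero) (hc s)).hasFDerivAt.comp_hasDerivAt s (hcderiv s)
    have hφccont : Continuous (fun s => D (hc s) (gc s)) :=
      isBoundedBilinearMap_apply.continuous.comp ((hDcont.comp hccont).prodMk gccont)
    have hftc : F (hc T) - F (hc 0) = ∫ s in Ioc 0 T, D (hc s) (gc s) := by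
      rw [← intervalIntegral.integral_of_le hT]
      exact (intervalIntegral.integral_eq_sub_of_hasDerivAt (fun s _ => hFC s)
        (hφccont.intervalIntegrable 0 T)).symm
    have hc0 : hc 0 = c := by simp [hhc]
    -- estimates
    have hφcint : IntegrableOn (fun s => D (hc s) (gc s)) (Ioc 0 T) volume :=
      hφccont.integrableOn_Ioc
    have hptwise : ∀ s ∈ Ioc (0:ℝ) T,
        ‖D (hc s) (gc s) - D (h s) (g s)‖ ≤ M * ‖gc s - g s‖ + (ε / (2 * (I + 1))) * ‖g s‖ := by
      intro s hs
      have hsIcc : s ∈ Icc (0:ℝ) T := ⟨hs.1.le, hs.2⟩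
      have h1 : ‖D (hc s) (gc s) - D (hc s) (g s)‖ ≤ M * ‖gc s - g s‖ := by
        rw [← map_sub]
        calc ‖D (hc s) (gc s - g s)‖ ≤ ‖D (hc s)‖ * ‖gc s - g s‖ := (D (hc s)).le_opNorm _
          _ ≤ M * ‖gc s - g s‖ :=
            mul_le_mul_of_nonneg_right (hM _ (hcmem s hsIcc)) (norm_nonneg _)
      have h2 : ‖D (hc s) (g s) - D (h s) (g s)‖ ≤ (ε / (2 * (I + 1))) * ‖g s‖ := by
        have := hδ₁' (hc s) (hcmem s hsIcc) (h s) (hmem s hsIcc)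
          (lt_of_le_of_lt (hdist s hs.1.le) hrδ₁)
        rw [dist_eq_norm] at this
        calc ‖D (hc s) (g s) - D (h s) (g s)‖ = ‖(D (hc s) - D (h s)) (g s)‖ := by
              rw [ContinuousLinearMap.sub_apply]
          _ ≤ ‖D (hc s) - D (h s)‖ * ‖g s‖ := (D (hc s) - D (h s)).le_opNorm _
          _ ≤ (ε / (2 * (I + 1))) * ‖g s‖ :=
            mul_le_mul_of_nonneg_right this.le (norm_nonneg _)
      calc ‖D (hc s) (gc s) - D (h s) (g s)‖
          ≤ ‖D (hc s) (gc s) - D (hc s) (g s)‖ + ‖D (hc s) (g s) - D (h s) (g s)‖ :=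
            norm_sub_le_norm_sub_add_norm_sub _ _ _
        _ ≤ M * ‖gc s - g s‖ + (ε / (2 * (I + 1))) * ‖g s‖ := add_le_add h1 h2
    -- the integral difference bound
    have hbound_int : Integrable
        (fun s => M * ‖gc s - g s‖ + (ε / (2 * (I + 1))) * ‖g s‖)
        (volume.restrict (Ioc 0 T)) :=
      (((gcint.sub hg).norm.const_mul M).add (hg.norm.const_mul _)).restrict
    have hsplit : (∫ s in Ioc 0 T, D (hc s) (gc s)) - ∫ s in Ioc 0 T, D (h s) (g s)
        = ∫ s in Ioc 0 T, (D (hc s) (gc s) - D (h s) (g s)) := by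
      exact (integral_sub hφcint hφint).symm
    have hint2 : |(∫ s in Ioc 0 T, D (hc s) (gc s)) - ∫ s in Ioc 0 T, D (h s) (g s)|
        ≤ ε / 4 + ε / 2 := by
      rw [hsplit]
      calc |∫ s in Ioc 0 T, (D (hc s) (gc s) - D (h s) (g s))|
          ≤ ∫ s in Ioc 0 T, ‖D (hc s) (gc s) - D (h s) (g s)‖ := by
            rw [← Real.norm_eq_abs]
            exact norm_integral_le_integral_norm _
        _ ≤ ∫ s in Ioc 0 T, (M * ‖gc s - g s‖ + (ε / (2 * (I + 1))) * ‖g s‖) := by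
            refine integral_mono_of_nonneg (ae_of_all _ fun s => norm_nonneg _) hbound_int ?_
            exact (ae_restrict_iff' measurableSet_Ioc).2 (ae_of_all _ hptwise)
        _ = M * (∫ s in Ioc 0 T, ‖gc s - g s‖) + (ε / (2 * (I + 1))) * I := by
            have h1 : Integrable (fun s => M * ‖gc s - g s‖)
                (volume.restrict (Ioc 0 T)) := by
              exact ((gcint.sub hg).norm.const_mul M).restrict
            have h2 : Integrable (fun s => (ε / (2 * (I + 1))) * ‖g s‖)
                (volume.restrict (Ioc 0 T)) := by
              exact (hg.norm.const_mul _).restrict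
            rw [integral_add h1 h2, integral_const_mul, integral_const_mul]
        _ ≤ M * r + (ε / (2 * (I + 1))) * I := by
            have hle : (∫ s in Ioc 0 T, ‖gc s - g s‖) ≤ r := by
              calc (∫ s in Ioc 0 T, ‖gc s - g s‖) ≤ ∫ s, ‖gc s - g s‖ :=
                  setIntegral_le_integral (gcint.sub hg).norm
                    (ae_of_all _ fun u => norm_nonneg _)
                _ = ∫ u, ‖g u - gc u‖ := by simp_rw [norm_sub_rev]
                _ ≤ r := gcapprox
            exact add_le_add (mul_le_mul_of_nonneg_left hle hM0) le_rfl
        _ ≤ ε / 4 + ε / 2 := by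
            have hM1 : (0:ℝ) < M + 1 := by linarith
            have hI1 : (0:ℝ) < I + 1 := by linarith
            have h1 : M * r ≤ ε / 4 := by
              have ha : M * r ≤ M * (ε / (4 * (M + 1))) := mul_le_mul_of_nonneg_left hrM hM0
              have hb : M * (ε / (4 * (M + 1))) = ε / 4 * (M / (M + 1)) := by
                field_simp
                try ring
              have hcineq : M / (M + 1) ≤ 1 := (div_le_one hM1).mpr (by linarith)
              nlinarith [hε.le]
            have h2 : (ε / (2 * (I + 1))) * I ≤ ε / 2 := by
              have hb : (ε / (2 * (I + 1))) * I = ε / 2 * (I / (I + 1)) := by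
                field_simp
                try ring
              have hcineq : I / (I + 1) ≤ 1 := (div_le_one hI1).mpr (by linarith)
              nlinarith [hε.le]
            exact add_le_add h1 h2
    have hterm1 : |F (h T) - F (hc T)| ≤ ε / 4 := by
      have hTmem : T ∈ Icc (0:ℝ) T := ⟨hT, le_rfl⟩
      have := hδ₂' (h T) (hmem T hTmem) (hc T) (hcmem T hTmem)
        (by rw [dist_comm]; exact lt_of_le_of_lt (hdist T hT) hrδ₂)
      rw [Real.dist_eq] at this
      exact this.le
    have hdd : d = (F (h T) - F (hc T)) +
        ((∫ s in Ioc 0 T, D (hc s) (gc s)) - ∫ s in Ioc 0 T, D (h s) (g s)) := by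
      rw [hc0] at hftc
      rw [hd]
      linarith
    calc |d| ≤ |F (h T) - F (hc T)| +
        |(∫ s in Ioc 0 T, D (hc s) (gc s)) - ∫ s in Ioc 0 T, D (h s) (g s)| := by
          rw [hdd]; exact abs_add_le _ _
      _ ≤ ε / 4 + (ε / 4 + ε / 2) := add_le_add hterm1 hint2
      _ = ε := by ring
  have hd0 : d = 0 := by
    by_contra hne
    have hpos : 0 < |d| := abs_pos.mpr hne
    have := key (|d| / 2) (by positivity)
    linarith
  have hfin : F (h T) - F c - ∫ s in Ioc 0 T, D (h s) (g s) = 0 := hd0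
  linarith

set_option maxHeartbeats 2000000

/-- **Generalized time-changed Itô formula (driftless-noise case `Ψ = 0`).**
Let `E` be a nondecreasing continuous function with `E 0 = 0` (a `StieltjesFunction`
with Lebesgue–Stieltjes measure `E.measure`), let `P` be locally Lebesgue-integrable,
`Φ` locally `dE`-integrable, and `X t = x₀ + ∫₀^t P s ds + ∫_{(0,t]} Φ s dE s`.
If `F : ℝ × ℝ × ℝⁿ → ℝ` is `C¹`, then for every `t ≥ 0`,
`F (t, E t, X t) - F (0, 0, x₀)
  = ∫₀^t (∂_{t₁} F + ∇ₓF ⋅ P) (s, E s, X s) ds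
  + ∫_{(0,t]} (∂_{t₂} F + ∇ₓF ⋅ Φ) (s, E s, X s) dE s`,
where the partial derivatives are expressed via the Fréchet derivative of `F`
applied to the directions `(1,0,0)`, `(0,1,0)` and `(0,0,v)`. -/
theorem timeChanged_ito_formula
    (n : ℕ) (E : StieltjesFunction ℝ) (hEcont : Continuous E) (hE0 : E 0 = 0)
    (x₀ : Fin n → ℝ) (P Φ : ℝ → Fin n → ℝ)
    (hPmeas : Measurable P)
    (hPint : ∀ t : ℝ, 0 ≤ t → IntegrableOn P (Set.Ioc 0 t) volume)
    (hΦmeas : Measurable Φ)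
    (hΦint : ∀ t : ℝ, 0 ≤ t → IntegrableOn Φ (Set.Ioc 0 t) E.measure)
    (X : ℝ → Fin n → ℝ)
    (hX : ∀ t : ℝ, 0 ≤ t →
      X t = x₀ + (∫ s in Set.Ioc 0 t, P s) + ∫ s in Set.Ioc 0 t, Φ s ∂E.measure)
    (F : ℝ × ℝ × (Fin n → ℝ) → ℝ) (hF : ContDiff ℝ 1 F) :
    ∀ t : ℝ, 0 ≤ t →
      F (t, E t, X t) - F (0, 0, x₀) =
        (∫ s in Set.Ioc 0 t,
          (fderiv ℝ F (s, E s, X s) (1, 0, 0) +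
            fderiv ℝ F (s, E s, X s) (0, 0, P s))) +
        ∫ s in Set.Ioc 0 t,
          (fderiv ℝ F (s, E s, X s) (0, 1, 0) +
            fderiv ℝ F (s, E s, X s) (0, 0, Φ s)) ∂E.measure := by
  intro t ht
  classical
  -- the time change τ and its inverse σ
  set τ : ℝ → ℝ := fun u => u + E u with hτdef
  have hτmono : StrictMono τ := fun a b hab => by
    have := E.mono hab.le
    simp only [hτdef]
    linarith
  have hτcont : Continuous τ := continuous_id.add hEcont
  have hτsurj : Function.Surjective τ := by
    refine Continuous.surjective hτcont ?_ ?_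
    · refine Filter.tendsto_atTop_mono' Filter.atTop ?_ Filter.tendsto_id
      filter_upwards [Filter.eventually_ge_atTop (0:ℝ)] with u hu
      have h1 : (0:ℝ) ≤ E u := hE0 ▸ E.mono hu
      simp only [hτdef, id_eq]
      linarith
    · refine Filter.tendsto_atBot_mono' Filter.atBot ?_ Filter.tendsto_id
      filter_upwards [Filter.eventually_le_atBot (0:ℝ)] with u hu
      have h1 : E u ≤ 0 := hE0 ▸ E.mono hu
      simp only [hτdef, id_eq]
      linarith
  set iso := StrictMono.orderIsoOfSurjective τ hτmono hτsurj with hisodef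
  set σ : ℝ → ℝ := fun s => iso.symm s with hσdef
  have hτσ : ∀ s, τ (σ s) = s := fun s =>
    StrictMono.orderIsoOfSurjective_self_symm_apply τ hτmono hτsurj s
  have hστ : ∀ u, σ (τ u) = u := fun u =>
    StrictMono.orderIsoOfSurjective_symm_apply_self τ hτmono hτsurj u
  have hσmono : Monotone σ := fun a b hab => iso.symm.monotone hab
  have hσcont : Continuous σ := (OrderIso.toHomeomorph iso).symm.continuous
  have hτ0 : τ 0 = 0 := by simp [hτdef, hE0]
  have hσ0 : σ 0 = 0 := by rw [← hτ0, hστ, hτ0]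
  have hτt0 : (0:ℝ) ≤ τ t := by rw [← hτ0]; exact hτmono.monotone ht
  have hlt : ∀ a u : ℝ, (a < τ u ↔ σ a < u) := fun a u => by
    conv_lhs => rw [← hτσ a]
    exact hτmono.lt_iff_lt
  have hle : ∀ u b : ℝ, (τ u ≤ b ↔ u ≤ σ b) := fun u b => by
    conv_lhs => rw [← hτσ b]
    exact hτmono.le_iff_le
  have hpre : ∀ a b : ℝ, τ ⁻¹' Set.Ioc a b = Set.Ioc (σ a) (σ b) := fun a b => by
    ext u
    simp only [Set.mem_preimage, Set.mem_Ioc, hlt, hle]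
  have hemb : MeasurableEmbedding τ := by
    have h1 := (OrderIso.toHomeomorph iso).measurableEmbedding
    have h2 : ((OrderIso.toHomeomorph iso) : ℝ → ℝ) = τ := by
      funext u
      simp [hisodef]
    rwa [h2] at h1
  have hτmeas : Measurable τ := hτcont.measurable
  -- the two image measures
  set μ1 := Measure.map τ (volume.restrict (Set.Ioc 0 t)) with hμ1def
  set μ2 := Measure.map τ (E.measure.restrict (Set.Ioc 0 t)) with hμ2def
  haveI hvfin : IsFiniteMeasure (volume.restrict (Set.Ioc (0:ℝ) t)) := by
    constructor
    rw [Measure.restrict_apply_univ, Real.volume_Ioc]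
    exact ENNReal.ofReal_lt_top
  haveI hEfin : IsFiniteMeasure (E.measure.restrict (Set.Ioc (0:ℝ) t)) := by
    constructor
    rw [Measure.restrict_apply_univ, E.measure_Ioc]
    exact ENNReal.ofReal_lt_top
  haveI hfin1 : IsFiniteMeasure μ1 := by
    constructor
    rw [hμ1def, Measure.map_apply hτmeas MeasurableSet.univ, Set.preimage_univ,
      Measure.restrict_apply_univ, Real.volume_Ioc]
    exact ENNReal.ofReal_lt_top
  haveI hfin2 : IsFiniteMeasure μ2 := by
    constructor
    rw [hμ2def, Measure.map_apply hτmeas MeasurableSet.univ, Set.preimage_univ,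
      Measure.restrict_apply_univ, E.measure_Ioc]
    exact ENNReal.ofReal_lt_top
  have hμ1Ioc : ∀ a b : ℝ, μ1 (Set.Ioc a b)
      = ENNReal.ofReal (min (σ b) t - max (σ a) 0) := fun a b => by
    rw [hμ1def, Measure.map_apply hτmeas measurableSet_Ioc, hpre,
      Measure.restrict_apply measurableSet_Ioc, Set.Ioc_inter_Ioc, Real.volume_Ioc]
  have hμ2Ioc : ∀ a b : ℝ, μ2 (Set.Ioc a b)
      = ENNReal.ofReal (E (min (σ b) t) - E (max (σ a) 0)) := fun a b => by
    rw [hμ2def, Measure.map_apply hτmeas measurableSet_Ioc, hpre,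
      Measure.restrict_apply measurableSet_Ioc, Set.Ioc_inter_Ioc, E.measure_Ioc]
  -- μ1 + μ2 is Lebesgue measure on (0, τ t]
  have hsum : μ1 + μ2 = volume.restrict (Set.Ioc 0 (τ t)) := by
    refine Measure.ext_of_Ioc _ _ ?_
    intro a b hab
    rw [Measure.add_apply, hμ1Ioc, hμ2Ioc, Measure.restrict_apply measurableSet_Ioc,
      Set.Ioc_inter_Ioc, Real.volume_Ioc]
    have hτA : τ (max (σ a) 0) = max a 0 := by
      rw [hτmono.monotone.map_max, hτσ, hτ0]
    have hτB : τ (min (σ b) t) = min b (τ t) := by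
      rw [hτmono.monotone.map_min, hτσ]
    set A := max (σ a) 0
    set B := min (σ b) t
    rcases le_total A B with hAB | hAB
    · have hEAB : E A ≤ E B := E.mono hAB
      rw [← ENNReal.ofReal_add (by linarith) (by linarith)]
      congr 1
      have : τ B - τ A = (B - A) + (E B - E A) := by
        simp only [hτdef]
        ring
      rw [← hτA, ← hτB]
      linarith
    · have hEAB : E B ≤ E A := E.mono hAB
      have hτAB : τ B ≤ τ A := hτmono.monotone hAB
      rw [ENNReal.ofReal_of_nonpos (by linarith), ENNReal.ofReal_of_nonpos (by linarith),
        ENNReal.ofReal_of_nonpos (by rw [← hτA, ← hτB]; linarith)]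
      simp
  have hle1 : μ1 ≤ volume := by
    have h1 : μ1 ≤ μ1 + μ2 := Measure.le_add_right le_rfl
    rw [hsum] at h1
    exact h1.trans Measure.restrict_le_self
  have hle2 : μ2 ≤ volume := by
    have h1 : μ2 ≤ μ1 + μ2 := Measure.le_add_left le_rfl
    rw [hsum] at h1
    exact h1.trans Measure.restrict_le_self
  have hac1 : μ1 ≪ volume := hle1.absolutelyContinuous
  have hac2 : μ2 ≪ volume := hle2.absolutelyContinuous
  -- densities of μ1, μ2 with respect to Lebesgue measure
  set e1 : ℝ → ℝ := fun s => (μ1.rnDeriv volume s).toReal with he1def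
  set e2 : ℝ → ℝ := fun s => (μ2.rnDeriv volume s).toReal with he2def
  -- integrands
  set w1 : ℝ → ℝ × ℝ × (Fin n → ℝ) := fun s => (1, 0, P (σ s)) with hw1def
  set w2 : ℝ → ℝ × ℝ × (Fin n → ℝ) := fun s => (0, 1, Φ (σ s)) with hw2def
  have hw1τ : ∀ u, w1 (τ u) = (1, 0, P u) := fun u => by rw [hw1def]; simp [hστ u]
  have hw2τ : ∀ u, w2 (τ u) = (0, 1, Φ u) := fun u => by rw [hw2def]; simp [hστ u]
  have hw1int : Integrable w1 μ1 := by
    rw [hμ1def, hemb.integrable_map_iff]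
    have heq : w1 ∘ τ = fun u => ((1:ℝ), (0:ℝ), P u) := funext fun u => hw1τ u
    rw [heq]
    exact (integrable_const _).prodMk ((integrable_const _).prodMk (hPint t ht))
  have hw2int : Integrable w2 μ2 := by
    rw [hμ2def, hemb.integrable_map_iff]
    have heq : w2 ∘ τ = fun u => ((0:ℝ), (1:ℝ), Φ u) := funext fun u => hw2τ u
    rw [heq]
    exact (integrable_const _).prodMk ((integrable_const _).prodMk (hΦint t ht))
  have hB1int : Integrable (fun s => e1 s • w1 s) volume :=
    (integrable_rnDeriv_smul_iff hac1).mpr hw1int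
  have hB2int : Integrable (fun s => e2 s • w2 s) volume :=
    (integrable_rnDeriv_smul_iff hac2).mpr hw2int
  set g : ℝ → ℝ × ℝ × (Fin n → ℝ) := fun s => e1 s • w1 s + e2 s • w2 s with hgdef
  have hgint : Integrable g volume := hB1int.add hB2int
  set c : ℝ × ℝ × (Fin n → ℝ) := (0, 0, x₀) with hcdef
  -- the integral of g over (0, s]
  have hgval : ∀ s : ℝ, 0 ≤ s → s ≤ τ t →
      c + (∫ u in Set.Ioc 0 s, g u) = (σ s, E (σ s), X (σ s)) := by
    intro s hs hst
    have hσs0 : 0 ≤ σ s := by rw [← hσ0]; exact hσmono hs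
    have hσst : σ s ≤ t := by rw [← hστ t]; exact hσmono hst
    have hIocsub : Set.Ioc (0:ℝ) (σ s) ∩ Set.Ioc 0 t = Set.Ioc 0 (σ s) :=
      Set.inter_eq_self_of_subset_left (Set.Ioc_subset_Ioc_right hσst)
    have hEσs0 : 0 ≤ E (σ s) := hE0 ▸ E.mono hσs0
    have h1 : (∫ u in Set.Ioc 0 s, e1 u • w1 u)
        = ∫ u in Set.Ioc 0 (σ s), ((1:ℝ), (0:ℝ), P u) := by
      rw [he1def, setIntegral_rnDeriv_smul hac1 measurableSet_Ioc,
        hμ1def, hemb.setIntegral_map, hpre, hσ0,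
        Measure.restrict_restrict measurableSet_Ioc, hIocsub]
      exact setIntegral_congr_fun measurableSet_Ioc fun u _ => hw1τ u
    have h2 : (∫ u in Set.Ioc 0 s, e2 u • w2 u)
        = ∫ u in Set.Ioc 0 (σ s), ((0:ℝ), (1:ℝ), Φ u) ∂E.measure := by
      rw [he2def, setIntegral_rnDeriv_smul hac2 measurableSet_Ioc,
        hμ2def, hemb.setIntegral_map, hpre, hσ0,
        Measure.restrict_restrict measurableSet_Ioc, hIocsub]
      exact setIntegral_congr_fun measurableSet_Ioc fun u _ => hw2τ u
    haveI : IsFiniteMeasure (volume.restrict (Set.Ioc (0:ℝ) (σ s))) := by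
      constructor
      rw [Measure.restrict_apply_univ, Real.volume_Ioc]
      exact ENNReal.ofReal_lt_top
    haveI : IsFiniteMeasure (E.measure.restrict (Set.Ioc (0:ℝ) (σ s))) := by
      constructor
      rw [Measure.restrict_apply_univ, E.measure_Ioc]
      exact ENNReal.ofReal_lt_top
    have h3 : (∫ u in Set.Ioc 0 (σ s), ((1:ℝ), (0:ℝ), P u))
        = (σ s, 0, ∫ u in Set.Ioc 0 (σ s), P u) := by
      rw [integral_pair (integrable_const _)
        ((integrable_const _).prodMk (hPint (σ s) hσs0))]
      rw [integral_pair (integrable_const _) (hPint (σ s) hσs0)]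
      rw [setIntegral_const, setIntegral_const, measureReal_def, Real.volume_Ioc,
        ENNReal.toReal_ofReal (by linarith)]
      simp [sub_zero]
    have h4 : (∫ u in Set.Ioc 0 (σ s), ((0:ℝ), (1:ℝ), Φ u) ∂E.measure)
        = (0, E (σ s), ∫ u in Set.Ioc 0 (σ s), Φ u ∂E.measure) := by
      rw [integral_pair (integrable_const _)
        ((integrable_const _).prodMk (hΦint (σ s) hσs0))]
      rw [integral_pair (integrable_const _) (hΦint (σ s) hσs0)]
      rw [setIntegral_const, setIntegral_const, measureReal_def, E.measure_Ioc, hE0, sub_zero,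
        ENNReal.toReal_ofReal hEσs0]
      simp
    have h5 : (∫ u in Set.Ioc 0 s, g u)
        = (∫ u in Set.Ioc 0 s, e1 u • w1 u) + ∫ u in Set.Ioc 0 s, e2 u • w2 u := by
      rw [hgdef]
      exact integral_add hB1int.restrict hB2int.restrict
    rw [h5, h1, h2, h3, h4, hX (σ s) hσs0, hcdef]
    simp [Prod.ext_iff]
    abel
  -- apply the chain rule along the time-changed path
  have hcore := core_chain_rule F hF g hgint c (τ t) hτt0
  have hend : c + (∫ u in Set.Ioc 0 (τ t), g u) = (t, E t, X t) := by
    rw [hgval (τ t) hτt0 le_rfl, hστ t]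
  rw [hend, hcdef] at hcore
  -- now rewrite the right-hand side of hcore
  have hDcont : Continuous (fun x : ℝ × ℝ × (Fin n → ℝ) => fderiv ℝ F x) :=
    hF.continuous_fderiv one_ne_zero
  set hh : ℝ → ℝ × ℝ × (Fin n → ℝ) := fun s => c + ∫ u in (0:ℝ)..s, g u with hhhdef
  have hhcont : Continuous hh := continuous_const.add (hgint.continuous_primitive 0)
  have hhIoc : ∀ s : ℝ, 0 ≤ s → c + (∫ u in Set.Ioc 0 s, g u) = hh s := fun s hs => by
    rw [hhhdef]
    simp [intervalIntegral.integral_of_le hs]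
  have hhH : ∀ s : ℝ, 0 ≤ s → s ≤ τ t → hh s = (σ s, E (σ s), X (σ s)) := fun s hs hst => by
    rw [← hhIoc s hs]
    exact hgval s hs hst
  have hstep1 : (∫ s in Set.Ioc 0 (τ t), fderiv ℝ F (c + ∫ u in Set.Ioc 0 s, g u) (g s))
      = ∫ s in Set.Ioc 0 (τ t), fderiv ℝ F (hh s) (g s) :=
    setIntegral_congr_fun measurableSet_Ioc fun s hs => by rw [hhIoc s hs.1.le]
  rw [hstep1] at hcore
  have hK : IsCompact (hh '' Set.Icc 0 (τ t)) := isCompact_Icc.image hhcont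
  obtain ⟨M, hM⟩ := hK.exists_bound_of_continuousOn hDcont.continuousOn
  have hψint : ∀ (B : ℝ → ℝ × ℝ × (Fin n → ℝ)), Integrable B volume →
      IntegrableOn (fun s => fderiv ℝ F (hh s) (B s)) (Set.Ioc 0 (τ t)) volume := by
    intro B hB
    have hm : AEStronglyMeasurable (fun s => fderiv ℝ F (hh s) (B s)) volume :=
      isBoundedBilinearMap_apply.continuous.comp_aestronglyMeasurable
        (((hDcont.comp hhcont).aestronglyMeasurable).prodMk hB.aestronglyMeasurable)
    refine Integrable.mono' ((hB.norm.const_mul M).restrict) hm.restrict ?_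
    refine (ae_restrict_iff' measurableSet_Ioc).2 (ae_of_all _ fun s hs => ?_)
    calc ‖fderiv ℝ F (hh s) (B s)‖ ≤ ‖fderiv ℝ F (hh s)‖ * ‖B s‖ :=
        (fderiv ℝ F (hh s)).le_opNorm _
      _ ≤ M * ‖B s‖ := mul_le_mul_of_nonneg_right
          (hM _ ⟨s, ⟨hs.1.le, hs.2⟩, rfl⟩) (norm_nonneg _)
  have hstep2 : (∫ s in Set.Ioc 0 (τ t), fderiv ℝ F (hh s) (g s))
      = (∫ s in Set.Ioc 0 (τ t), fderiv ℝ F (hh s) (e1 s • w1 s))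
        + ∫ s in Set.Ioc 0 (τ t), fderiv ℝ F (hh s) (e2 s • w2 s) := by
    rw [← integral_add (hψint _ hB1int) (hψint _ hB2int)]
    refine setIntegral_congr_fun measurableSet_Ioc fun s hs => ?_
    rw [hgdef]
    exact map_add _ _ _
  have hτIoc : ∀ u ∈ Set.Ioc 0 t, hh (τ u) = (u, E u, X u) := by
    intro u hu
    have h0u : 0 ≤ τ u := by rw [← hτ0]; exact hτmono.monotone hu.1.le
    have hut : τ u ≤ τ t := hτmono.monotone hu.2
    rw [hhH (τ u) h0u hut, hστ u]
  have hstep3 : (∫ s in Set.Ioc 0 (τ t), fderiv ℝ F (hh s) (e1 s • w1 s))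
      = ∫ u in Set.Ioc 0 t, (fderiv ℝ F (u, E u, X u) (1, 0, 0)
          + fderiv ℝ F (u, E u, X u) (0, 0, P u)) := by
    have ha : (∫ s in Set.Ioc 0 (τ t), fderiv ℝ F (hh s) (e1 s • w1 s))
        = ∫ s in Set.Ioc 0 (τ t), e1 s • fderiv ℝ F (hh s) (w1 s) :=
      setIntegral_congr_fun measurableSet_Ioc fun s _ =>
        map_smul (fderiv ℝ F (hh s)) (e1 s) (w1 s)
    rw [ha, he1def, setIntegral_rnDeriv_smul hac1 measurableSet_Ioc, hμ1def,
      hemb.setIntegral_map, hpre, hσ0, hστ,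
      Measure.restrict_restrict measurableSet_Ioc, Set.inter_self]
    refine setIntegral_congr_fun measurableSet_Ioc fun u hu => ?_
    rw [hτIoc u hu, hw1τ u]
    have hsum' : ((1:ℝ), (0:ℝ), (0 : Fin n → ℝ)) + ((0:ℝ), (0:ℝ), P u)
        = ((1:ℝ), (0:ℝ), P u) := by simp
    rw [← hsum', map_add]
  have hstep4 : (∫ s in Set.Ioc 0 (τ t), fderiv ℝ F (hh s) (e2 s • w2 s))
      = ∫ u in Set.Ioc 0 t, (fderiv ℝ F (u, E u, X u) (0, 1, 0)
          + fderiv ℝ F (u, E u, X u) (0, 0, Φ u)) ∂E.measure := by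
    have ha : (∫ s in Set.Ioc 0 (τ t), fderiv ℝ F (hh s) (e2 s • w2 s))
        = ∫ s in Set.Ioc 0 (τ t), e2 s • fderiv ℝ F (hh s) (w2 s) :=
      setIntegral_congr_fun measurableSet_Ioc fun s _ =>
        map_smul (fderiv ℝ F (hh s)) (e2 s) (w2 s)
    rw [ha, he2def, setIntegral_rnDeriv_smul hac2 measurableSet_Ioc, hμ2def,
      hemb.setIntegral_map, hpre, hσ0, hστ,
      Measure.restrict_restrict measurableSet_Ioc, Set.inter_self]
    refine setIntegral_congr_fun measurableSet_Ioc fun u hu => ?_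
    rw [hτIoc u hu, hw2τ u]
    have hsum' : ((0:ℝ), (1:ℝ), (0 : Fin n → ℝ)) + ((0:ℝ), (0:ℝ), Φ u)
        = ((0:ℝ), (1:ℝ), Φ u) := by simp
    rw [← hsum', map_add]
  rw [hstep2, hstep3, hstep4] at hcore
  exact hcore
end
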